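/- arXiv:2506.01791 — 8 statements merged into one kernel-verified Lean document; each statement's English description precedes it below -/
import Mathlib

section
/- Let f : ℝ^d → ℝ be differentiable with μ < L, such that L·‖·‖²/2 − f and f − μ·‖·‖²/2 are convex. Then for all x, y ∈ ℝ^d, f(x) − f(y) − ⟨∇f(y), x − y⟩ ≥ (μ/2)‖x − y‖² + (1/(2(L−μ)))‖∇f(x) − ∇f(y) − μ(x − y)‖². -/
open Set
open scoped RealInnerProductSpace

lemma convex_tangent_le {E : Type*} [NormedAddCommGroup E] [InnerProductSpace ℝ E]
    {φ : E → ℝ} {D : E → E →L[ℝ] ℝ} (hd : ∀ p, HasFDerivAt φ (D p) p)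
    (hc : ConvexOn ℝ univ φ) (w z : E) :
    φ w + D w (z - w) ≤ φ z := by
  have hline : ∀ t : ℝ, HasDerivAt (fun t : ℝ => w + t • (z - w)) (z - w) t := by
    intro t
    simpa using ((hasDerivAt_id t).smul_const (z - w)).const_add w
  have hg : ∀ t : ℝ, HasDerivAt (fun t : ℝ => φ (w + t • (z - w)))
      (D (w + t • (z - w)) (z - w)) t := fun t => (hd _).comp_hasDerivAt t (hline t)
  have hgc : ConvexOn ℝ univ (fun t : ℝ => φ (w + t • (z - w))) := by
    have h2 := hc.comp_affineMap (AffineMap.lineMap w z : ℝ →ᵃ[ℝ] E)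
    simpa [Function.comp_def, AffineMap.lineMap_apply, vsub_eq_sub, vadd_eq_add, add_comm] using h2
  have key := hgc.le_slope_of_hasDerivAt (mem_univ (0:ℝ)) (mem_univ (1:ℝ)) one_pos (hg 0)
  simp [slope_def_field] at key
  rw [map_sub]; linarith

theorem stmt_0 {d : ℕ} (f : EuclideanSpace ℝ (Fin d) → ℝ) (μ L : ℝ)
    (hf : Differentiable ℝ f) (hμL : μ < L)
    (hL : ConvexOn ℝ univ (fun x => L / 2 * ‖x‖ ^ 2 - f x))
    (hμ : ConvexOn ℝ univ (fun x => f x - μ / 2 * ‖x‖ ^ 2)) :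
    ∀ x y : EuclideanSpace ℝ (Fin d),
      f x - f y - ⟪gradient f y, x - y⟫ ≥
        μ / 2 * ‖x - y‖ ^ 2 +
        1 / (2 * (L - μ)) * ‖gradient f x - gradient f y - μ • (x - y)‖ ^ 2 := by
  intro x y
  have hM : (0:ℝ) < L - μ := sub_pos.mpr hμL
  have hM0 : L - μ ≠ 0 := ne_of_gt hM
  have hDf : ∀ p : EuclideanSpace ℝ (Fin d),
      HasFDerivAt f ((InnerProductSpace.toDual ℝ (EuclideanSpace ℝ (Fin d))) (gradient f p)) p :=
    fun p => hasGradientAt_iff_hasFDerivAt.mp (hf p).hasGradientAt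
  have hDq : ∀ p : EuclideanSpace ℝ (Fin d),
      HasFDerivAt (fun x : EuclideanSpace ℝ (Fin d) => f x - μ / 2 * ‖x‖ ^ 2)
      ((InnerProductSpace.toDual ℝ (EuclideanSpace ℝ (Fin d))) (gradient f p)
        - (μ / 2) • (2 • (innerSL ℝ p))) p :=
    fun p => (hDf p).sub (((hasStrictFDerivAt_norm_sq p).hasFDerivAt).const_mul (μ / 2))
  have hDh : ∀ p : EuclideanSpace ℝ (Fin d),
      HasFDerivAt (fun x : EuclideanSpace ℝ (Fin d) => L / 2 * ‖x‖ ^ 2 - f x)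
      ((L / 2) • (2 • (innerSL ℝ p))
        - (InnerProductSpace.toDual ℝ (EuclideanSpace ℝ (Fin d))) (gradient f p)) p :=
    fun p => (((hasStrictFDerivAt_norm_sq p).hasFDerivAt).const_mul (L / 2)).sub (hDf p)
  set gx := gradient f x with hgx
  set gy := gradient f y with hgy
  set v : EuclideanSpace ℝ (Fin d) := gx - gy - μ • (x - y) with hv
  -- key inequality for arbitrary z
  have key : ∀ z : EuclideanSpace ℝ (Fin d),
      f x - f y - ⟪gy, x - y⟫ - μ / 2 * ‖x - y‖ ^ 2 ≥
        - ⟪v, z - x⟫ - (L - μ) / 2 * ‖z - x‖ ^ 2 := by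
    intro z
    have ha := convex_tangent_le hDq hμ y z
    have hb := convex_tangent_le hDh hL x z
    simp only [ContinuousLinearMap.sub_apply, ContinuousLinearMap.smul_apply,
      InnerProductSpace.toDual_apply_apply, innerSL_apply_apply, smul_eq_mul] at ha hb
    simp only [← real_inner_self_eq_norm_sq] at ha hb ⊢
    simp only [hv, inner_sub_left, inner_sub_right, inner_smul_left, inner_smul_right,
      conj_trivial, real_inner_comm z x, real_inner_comm z y, real_inner_comm y x,
      real_inner_comm gx x, real_inner_comm gx y, real_inner_comm gx z,
      real_inner_comm gy x, real_inner_comm gy y, real_inner_comm gy z,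
      real_inner_comm gy gx] at ha hb ⊢
    ring_nf at ha hb ⊢
    nlinarith [ha, hb]
  have hkey := key (x - (L - μ)⁻¹ • v)
  have e1 : (x - (L - μ)⁻¹ • v) - x = -((L - μ)⁻¹ • v) := by abel
  rw [e1] at hkey
  have e2 : - ⟪v, -((L - μ)⁻¹ • v)⟫ - (L - μ) / 2 * ‖-((L - μ)⁻¹ • v)‖ ^ 2
      = 1 / (2 * (L - μ)) * ‖v‖ ^ 2 := by
    rw [inner_neg_right, inner_smul_right, norm_neg, norm_smul, real_inner_self_eq_norm_sq]
    rw [Real.norm_eq_abs, mul_pow, sq_abs]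
    field_simp
    ring
  rw [e2] at hkey
  linarith
end

section
/- Let f₁, f₂ : ℝ^d → ℝ be differentiable with curvatures in [μ₁, L₁] and [μ₂, L₂] respectively (μ₁ < L₁, μ₂ < L₂). Suppose xₖ, xₖ₊₁ satisfy the DCA condition ∇f₁(xₖ₊₁) = ∇f₂(xₖ). Write Δx = xₖ − xₖ₊₁, Gᵏ = ∇f₁(xₖ) − ∇f₂(xₖ), Gᵏ⁺¹ = ∇f₁(xₖ₊₁) − ∇f₂(xₖ₊₁), F = f₁ − f₂. Then F(xₖ) − F(xₖ₊₁) ≥ ((μ₁+μ₂)/2)‖Δx‖² + ‖Gᵏ⁺¹ − μ₂Δx‖²/(2(L₂−μ₂)) + ‖Gᵏ − μ₁Δx‖²/(2(L₁−μ₁)). -/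
open Set
open scoped RealInnerProductSpace

set_option linter.unusedSectionVars false

variable {E : Type*} [NormedAddCommGroup E] [InnerProductSpace ℝ E] [CompleteSpace E]

/-- Subgradient inequality for differentiable convex functions. -/
lemma my_subgrad {g : E → ℝ} {G x : E} (hc : ConvexOn ℝ univ g)
    (hG : HasGradientAt g G x) (z : E) : g x + ⟪G, z - x⟫ ≤ g z := by
  set A : ℝ →ᵃ[ℝ] E := AffineMap.lineMap x z with hA
  have hφc : ConvexOn ℝ univ (g ∘ A) := by
    simpa using hc.comp_affineMap A
  have hAd : HasDerivAt (fun t : ℝ => A t) (z - x) 0 := by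
    have : (fun t : ℝ => A t) = fun t : ℝ => t • (z - x) + x := by
      funext t; simp [hA, AffineMap.lineMap_apply_module']
    rw [this]
    simpa using ((hasDerivAt_id (0:ℝ)).smul_const (z - x)).add_const x
  have hd : HasDerivAt (g ∘ A) ⟪G, z - x⟫ 0 := by
    have h0 : A 0 = x := by simp [hA]
    have := (h0 ▸ hG.hasFDerivAt).comp_hasDerivAt 0 hAd
    simpa [InnerProductSpace.toDual_apply_apply] using this
  have := hφc.le_slope_of_hasDerivAt (mem_univ (0:ℝ)) (mem_univ (1:ℝ)) one_pos hd
  have h1 : A 1 = z := by simp [hA]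
  have h0 : A 0 = x := by simp [hA]
  rw [slope_def_field] at this
  simp only [Function.comp, h1, h0] at this
  linarith

/-- Gradient of `c/2 * ‖·‖^2`. -/
lemma my_hasGrad_sq (c : ℝ) (x : E) :
    HasGradientAt (fun y : E => c / 2 * ‖y‖ ^ 2) (c • x) x := by
  rw [hasGradientAt_iff_hasFDerivAt]
  have h1 : HasFDerivAt (fun y : E => (⟪y, y⟫ : ℝ))
      ((fderivInnerCLM ℝ (x, x)).comp
        ((ContinuousLinearMap.id ℝ E).prod (ContinuousLinearMap.id ℝ E))) x :=
    (hasFDerivAt_id x).inner ℝ (hasFDerivAt_id x)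
  have h2 := h1.const_mul (c / 2)
  have hfun : (fun y : E => c / 2 * (⟪y, y⟫ : ℝ)) = fun y : E => c / 2 * ‖y‖ ^ 2 := by
    funext y; rw [real_inner_self_eq_norm_sq]
  rw [hfun] at h2
  refine h2.congr_fderiv ?_
  ext v
  simp [InnerProductSpace.toDual_apply_apply, fderivInnerCLM_apply, real_inner_smul_left,
    real_inner_comm]
  ring

lemma my_hasGrad_sub1 (f : E → ℝ) {x : E} (hf : DifferentiableAt ℝ f x) (c : ℝ) :
    HasGradientAt (fun y => f y - c / 2 * ‖y‖ ^ 2) (gradient f x - c • x) x := by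
  rw [hasGradientAt_iff_hasFDerivAt]
  have h1 := hf.hasGradientAt.hasFDerivAt
  have h2 := ((my_hasGrad_sq c x).hasFDerivAt : HasFDerivAt _ _ x)
  rw [map_sub]; exact h1.sub h2

lemma my_hasGrad_sub2 (f : E → ℝ) {x : E} (hf : DifferentiableAt ℝ f x) (c : ℝ) :
    HasGradientAt (fun y => c / 2 * ‖y‖ ^ 2 - f y) (c • x - gradient f x) x := by
  rw [hasGradientAt_iff_hasFDerivAt]
  have h1 := hf.hasGradientAt.hasFDerivAt
  have h2 := ((my_hasGrad_sq c x).hasFDerivAt : HasFDerivAt _ _ x)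
  rw [map_sub]; exact h2.sub h1

/-- Lower bound for smooth convex functions (co-coercivity). -/
lemma my_lb {g : E → ℝ} {G : E → E} {L' : ℝ} (hL' : 0 < L')
    (hg : ∀ w z, g w + ⟪G w, z - w⟫ ≤ g z)
    (hsm : ∀ w z, g z ≤ g w + ⟪G w, z - w⟫ + L' / 2 * ‖z - w‖ ^ 2)
    (x y : E) : ‖G x - G y‖ ^ 2 / (2 * L') ≤ g x - g y - ⟪G y, x - y⟫ := by
  set u := G x - G y with hu
  set z := x - L'⁻¹ • u with hz
  have a := hg y z
  have b := hsm x z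
  have ezy : z - y = (x - y) - L'⁻¹ • u := by rw [hz]; abel
  have ezx : z - x = -(L'⁻¹ • u) := by rw [hz]; abel
  rw [ezy] at a
  rw [ezx] at b
  rw [inner_sub_right, real_inner_smul_right] at a
  rw [inner_neg_right, real_inner_smul_right, norm_neg, norm_smul] at b
  have hGu : ⟪G x, u⟫ - ⟪G y, u⟫ = ‖u‖ ^ 2 := by
    rw [← inner_sub_left, ← hu, real_inner_self_eq_norm_sq]
  have hns : (‖L'⁻¹‖ * ‖u‖) ^ 2 = L'⁻¹ ^ 2 * ‖u‖ ^ 2 := by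
    rw [mul_pow, Real.norm_eq_abs, sq_abs]
  rw [hns] at b
  have hL'ne : L' ≠ 0 := ne_of_gt hL'
  have key : L'⁻¹ * ⟪G x, u⟫ - L'⁻¹ * ⟪G y, u⟫ - L' / 2 * (L'⁻¹ ^ 2 * ‖u‖ ^ 2)
      = ‖u‖ ^ 2 / (2 * L') := by
    have h3 : ⟪G x, u⟫ = ⟪G y, u⟫ + ‖u‖ ^ 2 := by linarith
    rw [h3]; field_simp; ring
  linarith [a, b, key]

/-- Interpolation inequality for a function with curvature in `[μ, L]`. -/
lemma my_interp {f : E → ℝ} (hf : Differentiable ℝ f) {μ L : ℝ} (h : μ < L)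
    (hL : ConvexOn ℝ univ (fun x => L / 2 * ‖x‖ ^ 2 - f x))
    (hμ : ConvexOn ℝ univ (fun x => f x - μ / 2 * ‖x‖ ^ 2))
    (x y : E) :
    f x - f y - ⟪gradient f y, x - y⟫ ≥
      ‖gradient f x - gradient f y - μ • (x - y)‖ ^ 2 / (2 * (L - μ)) +
      μ / 2 * ‖x - y‖ ^ 2 := by
  set g : E → ℝ := fun w => f w - μ / 2 * ‖w‖ ^ 2 with hgdef
  set G : E → E := fun w => gradient f w - μ • w with hGdef
  have hg : ∀ w z, g w + ⟪G w, z - w⟫ ≤ g z := fun w z =>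
    my_subgrad hμ (my_hasGrad_sub1 f (hf w) μ) z
  have hsm : ∀ w z, g z ≤ g w + ⟪G w, z - w⟫ + (L - μ) / 2 * ‖z - w‖ ^ 2 := by
    intro w z
    have hs := my_subgrad hL (my_hasGrad_sub2 f (hf w) L) z
    have hexp : ‖z‖ ^ 2 = ‖w‖ ^ 2 + 2 * ⟪w, z - w⟫ + ‖z - w‖ ^ 2 := by
      have := norm_add_sq_real w (z - w)
      simpa using this
    rw [inner_sub_left, real_inner_smul_left] at hs
    simp only [hgdef, hGdef, inner_sub_left, real_inner_smul_left]
    nlinarith [hs, hexp]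
  have hlb := my_lb (by linarith : (0:ℝ) < L - μ) hg hsm x y
  have hGxy : G x - G y = gradient f x - gradient f y - μ • (x - y) := by
    simp only [hGdef, smul_sub]; abel
  have hexp2 : ‖x‖ ^ 2 = ‖y‖ ^ 2 + 2 * ⟪y, x - y⟫ + ‖x - y‖ ^ 2 := by
    have := norm_add_sq_real y (x - y)
    simpa using this
  rw [hGxy] at hlb
  simp only [hgdef, hGdef, inner_sub_left, real_inner_smul_left] at hlb
  have h3 : μ / 2 * ‖x‖ ^ 2 = μ / 2 * ‖y‖ ^ 2 + μ * ⟪y, x - y⟫ + μ / 2 * ‖x - y‖ ^ 2 := by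
    linear_combination (μ / 2) * hexp2
  linarith [hlb, h3]

theorem stmt_1 {d : ℕ} (f₁ f₂ : EuclideanSpace ℝ (Fin d) → ℝ) (μ₁ L₁ μ₂ L₂ : ℝ)
    (hf₁ : Differentiable ℝ f₁) (hf₂ : Differentiable ℝ f₂)
    (h₁ : μ₁ < L₁) (h₂ : μ₂ < L₂)
    (hL₁ : ConvexOn ℝ univ (fun x => L₁ / 2 * ‖x‖ ^ 2 - f₁ x))
    (hμ₁ : ConvexOn ℝ univ (fun x => f₁ x - μ₁ / 2 * ‖x‖ ^ 2))
    (hL₂ : ConvexOn ℝ univ (fun x => L₂ / 2 * ‖x‖ ^ 2 - f₂ x))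
    (hμ₂ : ConvexOn ℝ univ (fun x => f₂ x - μ₂ / 2 * ‖x‖ ^ 2))
    (xk xk1 : EuclideanSpace ℝ (Fin d))
    (hDCA : gradient f₁ xk1 = gradient f₂ xk) :
    (f₁ xk - f₂ xk) - (f₁ xk1 - f₂ xk1) ≥
      (μ₁ + μ₂) / 2 * ‖xk - xk1‖ ^ 2 +
      ‖(gradient f₁ xk1 - gradient f₂ xk1) - μ₂ • (xk - xk1)‖ ^ 2 / (2 * (L₂ - μ₂)) +
      ‖(gradient f₁ xk - gradient f₂ xk) - μ₁ • (xk - xk1)‖ ^ 2 / (2 * (L₁ - μ₁)) := by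
  have A := my_interp hf₁ h₁ hL₁ hμ₁ xk xk1
  have B := my_interp hf₂ h₂ hL₂ hμ₂ xk1 xk
  rw [hDCA] at A
  have e1 : gradient f₂ xk1 - gradient f₂ xk - μ₂ • (xk1 - xk)
      = -((gradient f₁ xk1 - gradient f₂ xk1) - μ₂ • (xk - xk1)) := by
    rw [← hDCA]; module
  rw [e1, norm_neg] at B
  have e2 : ⟪gradient f₂ xk, xk1 - xk⟫ = -⟪gradient f₂ xk, xk - xk1⟫ := by
    rw [← inner_neg_right]; congr 1; abel
  rw [e2] at B
  have e3 : ‖xk1 - xk‖ = ‖xk - xk1‖ := norm_sub_rev _ _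
  rw [e3] at B
  linarith [A, B]
end

section
/- Let f₁, f₂ : ℝ^d → ℝ be differentiable with curvatures in [μ₁, L₁] and [μ₂, L₂] (μ₁ < L₁, μ₂ < L₂), and let xₖ, xₖ₊₁ satisfy ∇f₁(xₖ₊₁) = ∇f₂(xₖ). With Δx = xₖ − xₖ₊₁ and Gᵏ⁺¹ = ∇f₁(xₖ₊₁) − ∇f₂(xₖ₊₁), it holds that ⟨Gᵏ⁺¹, Δx⟩ ≥ μ₂‖Δx‖² + ‖Gᵏ⁺¹ − μ₂Δx‖²/(L₂−μ₂). -/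
open Set
open scoped RealInnerProductSpace

variable {F : Type*} [NormedAddCommGroup F] [InnerProductSpace ℝ F] [CompleteSpace F]

private lemma hasGradientAt_half_sq (c : ℝ) (x : F) :
    HasGradientAt (fun y : F => c / 2 * ‖y‖ ^ 2) (c • x) x := by
  rw [hasGradientAt_iff_hasFDerivAt]
  have h := (hasFDerivAt_id x).norm_sq.const_mul (c / 2)
  refine h.congr_fderiv ?_
  ext v
  simp [InnerProductSpace.toDual_apply_apply, real_inner_smul_left]
  ring

private lemma HasGradientAt.sub' {f g : F → ℝ} {f' g' x : F}
    (hf : HasGradientAt f f' x) (hg : HasGradientAt g g' x) :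
    HasGradientAt (fun z => f z - g z) (f' - g') x := by
  rw [hasGradientAt_iff_hasFDerivAt] at *
  rw [map_sub]
  exact hf.sub hg

/-- first-order condition for convexity -/
private lemma convex_grad_ineq {g : F → ℝ} {G : F → F}
    (hconv : ConvexOn ℝ univ g) (hg : ∀ z, HasGradientAt g (G z) z) (x y : F) :
    g x + ⟪G x, y - x⟫ ≤ g y := by
  set c : ℝ →ᵃ[ℝ] F := AffineMap.lineMap x y with hc
  have hφconv : ConvexOn ℝ univ (g ∘ c) := by
    have := hconv.comp_affineMap c
    simpa using this
  have hcurve : HasDerivAt (fun t : ℝ => c t) (y - x) 0 := by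
    have hceq : (fun t : ℝ => c t) = fun t => t • (y - x) + x := by
      funext t
      simp only [hc, AffineMap.lineMap_apply_module]
      module
    rw [hceq]
    simpa using ((hasDerivAt_id (0:ℝ)).smul_const (y - x)).add_const x
  have hφ' : HasDerivAt (g ∘ c) ⟪G x, y - x⟫ 0 := by
    have h0 : c 0 = x := by simp [hc]
    have := ((hg (c 0)).hasFDerivAt.comp_hasDerivAt 0 hcurve)
    simpa [h0, InnerProductSpace.toDual_apply_apply] using this
  have hslope := hφconv.le_slope_of_hasDerivAt (mem_univ (0:ℝ)) (mem_univ (1:ℝ)) zero_lt_one hφ'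
  rw [slope_def_field] at hslope
  have h0 : c 0 = x := by simp [hc]
  have h1 : c 1 = y := by simp [hc]
  simp only [Function.comp_apply, h0, h1] at hslope
  have : ⟪G x, y - x⟫ ≤ g y - g x := by
    calc ⟪G x, y - x⟫ ≤ (g y - g x) / (1 - 0) := hslope
    _ = g y - g x := by norm_num
  linarith

private lemma smooth_upper {g : F → ℝ} {G : F → F} {c : ℝ}
    (hsmooth : ConvexOn ℝ univ (fun z => c / 2 * ‖z‖ ^ 2 - g z))
    (hg : ∀ z, HasGradientAt g (G z) z) (x y : F) :
    g y ≤ g x + ⟪G x, y - x⟫ + c / 2 * ‖y - x‖ ^ 2 := by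
  have hg' : ∀ z, HasGradientAt (fun w => c / 2 * ‖w‖ ^ 2 - g w) (c • z - G z) z :=
    fun z => (hasGradientAt_half_sq c z).sub' (hg z)
  have h := convex_grad_ineq hsmooth hg' x y
  have hexp : ⟪c • x - G x, y - x⟫ = c * ⟪x, y - x⟫ - ⟪G x, y - x⟫ := by
    rw [inner_sub_left, real_inner_smul_left]
  have hnorm : ‖y - x‖ ^ 2 = ‖y‖ ^ 2 - 2 * ⟪x, y⟫ + ‖x‖ ^ 2 := by
    rw [norm_sub_sq_real, real_inner_comm]
  have hinner : ⟪x, y - x⟫ = ⟪x, y⟫ - ‖x‖ ^ 2 := by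
    rw [inner_sub_right, real_inner_self_eq_norm_sq]
  rw [hexp, hinner] at h
  rw [hnorm]
  nlinarith [h]

private lemma cocoercive {g : F → ℝ} {G : F → F} {c : ℝ} (hc : 0 < c)
    (hconv : ConvexOn ℝ univ g)
    (hsmooth : ConvexOn ℝ univ (fun z => c / 2 * ‖z‖ ^ 2 - g z))
    (hg : ∀ z, HasGradientAt g (G z) z) (x y : F) :
    ‖G x - G y‖ ^ 2 / c ≤ ⟪G x - G y, x - y⟫ := by
  have key : ∀ a b : F, g a + ⟪G a, b - a⟫ + ‖G b - G a‖ ^ 2 / (2 * c) ≤ g b := by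
    intro a b
    set u : F := G b - G a with hu
    set z : F := b - (1 / c) • u with hz
    have hlow := convex_grad_ineq hconv hg a z
    have hup := smooth_upper hsmooth hg b z
    have hz_b : z - b = -((1 / c) • u) := by simp [hz]
    have hz_a : z - a = (b - a) - (1 / c) • u := by simp [hz]; abel
    have e1 : ⟪G b, z - b⟫ = -(1 / c) * ⟪G b, u⟫ := by
      rw [hz_b, inner_neg_right, real_inner_smul_right]; ring
    have e2 : ‖z - b‖ ^ 2 = (1 / c) ^ 2 * ‖u‖ ^ 2 := by
      rw [hz_b, norm_neg, norm_smul]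
      simp [mul_pow, abs_of_pos (by positivity : (0:ℝ) < 1 / c)]
    have e3 : ⟪G a, z - a⟫ = ⟪G a, b - a⟫ - (1 / c) * ⟪G a, u⟫ := by
      rw [hz_a, inner_sub_right, real_inner_smul_right]
    have e4 : ⟪G b, u⟫ - ⟪G a, u⟫ = ‖u‖ ^ 2 := by
      rw [← inner_sub_left, ← hu, real_inner_self_eq_norm_sq]
    rw [e1, e2] at hup
    rw [e3] at hlow
    have hc' : c ≠ 0 := ne_of_gt hc
    have : g a + ⟪G a, b - a⟫ - (1 / c) * ⟪G a, u⟫ ≤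
        g b + (-(1 / c) * ⟪G b, u⟫) + c / 2 * ((1 / c) ^ 2 * ‖u‖ ^ 2) := by linarith
    have h5 : (1 / c) * (⟪G b, u⟫ - ⟪G a, u⟫) = (1 / c) * ‖u‖ ^ 2 := by rw [e4]
    have hfin : g a + ⟪G a, b - a⟫ + (1 / c) * ‖u‖ ^ 2 - c / 2 * ((1 / c) ^ 2 * ‖u‖ ^ 2) ≤ g b := by
      nlinarith [this, h5]
    have harith : (1 / c) * ‖u‖ ^ 2 - c / 2 * ((1 / c) ^ 2 * ‖u‖ ^ 2) = ‖u‖ ^ 2 / (2 * c) := by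
      field_simp; ring
    linarith [hfin, harith.symm.le]
  have k1 := key x y
  have k2 := key y x
  have hsym : ‖G x - G y‖ = ‖G y - G x‖ := norm_sub_rev _ _
  have e5 : ⟪G y, x - y⟫ + ⟪G x, y - x⟫ = -⟪G x - G y, x - y⟫ := by
    rw [inner_sub_left]
    have : y - x = -(x - y) := by abel
    rw [this, inner_neg_right]
    ring
  have : ⟪G x - G y, x - y⟫ ≥ ‖G x - G y‖ ^ 2 / (2 * c) + ‖G y - G x‖ ^ 2 / (2 * c) := by
    nlinarith [k1, k2, e5]
  rw [← hsym] at this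
  have : ⟪G x - G y, x - y⟫ ≥ 2 * (‖G x - G y‖ ^ 2 / (2 * c)) := by linarith
  calc ‖G x - G y‖ ^ 2 / c = 2 * (‖G x - G y‖ ^ 2 / (2 * c)) := by field_simp
  _ ≤ ⟪G x - G y, x - y⟫ := this

theorem stmt_3 {d : ℕ} (f₁ f₂ : EuclideanSpace ℝ (Fin d) → ℝ) (μ₁ L₁ μ₂ L₂ : ℝ)
    (hf₁ : Differentiable ℝ f₁) (hf₂ : Differentiable ℝ f₂)
    (h₁ : μ₁ < L₁) (h₂ : μ₂ < L₂)
    (hL₁ : ConvexOn ℝ univ (fun x => L₁ / 2 * ‖x‖ ^ 2 - f₁ x))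
    (hμ₁ : ConvexOn ℝ univ (fun x => f₁ x - μ₁ / 2 * ‖x‖ ^ 2))
    (hL₂ : ConvexOn ℝ univ (fun x => L₂ / 2 * ‖x‖ ^ 2 - f₂ x))
    (hμ₂ : ConvexOn ℝ univ (fun x => f₂ x - μ₂ / 2 * ‖x‖ ^ 2))
    (xk xk1 : EuclideanSpace ℝ (Fin d))
    (hDCA : gradient f₁ xk1 = gradient f₂ xk) :
    ⟪gradient f₁ xk1 - gradient f₂ xk1, xk - xk1⟫ ≥
      μ₂ * ‖xk - xk1‖ ^ 2 +
      ‖(gradient f₁ xk1 - gradient f₂ xk1) - μ₂ • (xk - xk1)‖ ^ 2 / (L₂ - μ₂) := by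
  set c : ℝ := L₂ - μ₂ with hcdef
  have hc : 0 < c := sub_pos.mpr h₂
  set g : EuclideanSpace ℝ (Fin d) → ℝ := fun z => f₂ z - μ₂ / 2 * ‖z‖ ^ 2 with hgdef
  set G : EuclideanSpace ℝ (Fin d) → EuclideanSpace ℝ (Fin d) :=
    fun z => gradient f₂ z - μ₂ • z with hGdef
  have hg : ∀ z, HasGradientAt g (G z) z :=
    fun z => ((hf₂ z).hasGradientAt).sub' (hasGradientAt_half_sq μ₂ z)
  have hsmooth : ConvexOn ℝ univ (fun z => c / 2 * ‖z‖ ^ 2 - g z) := by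
    have heq : (fun z : EuclideanSpace ℝ (Fin d) => c / 2 * ‖z‖ ^ 2 - g z) =
        (fun z => L₂ / 2 * ‖z‖ ^ 2 - f₂ z) := by
      funext z; simp only [hgdef, hcdef]; ring
    rw [heq]; exact hL₂
  have hco := cocoercive hc hμ₂ hsmooth hg xk xk1
  have hGG : G xk - G xk1 =
      (gradient f₁ xk1 - gradient f₂ xk1) - μ₂ • (xk - xk1) := by
    rw [hDCA]
    simp only [hGdef, smul_sub]
    abel
  rw [hGG] at hco
  have hexp : ⟪(gradient f₁ xk1 - gradient f₂ xk1) - μ₂ • (xk - xk1), xk - xk1⟫ =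
      ⟪gradient f₁ xk1 - gradient f₂ xk1, xk - xk1⟫ - μ₂ * ‖xk - xk1‖ ^ 2 := by
    rw [inner_sub_left, real_inner_smul_left, real_inner_self_eq_norm_sq]
  rw [hexp] at hco
  linarith
end

section
/- Let f₁, f₂ : ℝ^d → ℝ be differentiable with curvatures in [μ₁, L₁] and [μ₂, L₂] (μ₁ < L₁, μ₂ < L₂, μ₁ + μ₂ ≥ 0), and let xₖ, xₖ₊₁ satisfy ∇f₁(xₖ₊₁) = ∇f₂(xₖ). Then F(xₖ) − F(xₖ₊₁) ≥ ((μ₁+μ₂)/2)‖xₖ − xₖ₊₁‖², where F = f₁ − f₂. In particular, F decreases at each DCA iteration when μ₁ + μ₂ ≥ 0, and strictly so when μ₁ + μ₂ > 0 unless xₖ₊₁ = xₖ. -/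
open Set
open scoped RealInnerProductSpace

lemma aux_tangent {d : ℕ} (φ : EuclideanSpace ℝ (Fin d) → ℝ)
    (hφ : Differentiable ℝ φ) (hc : ConvexOn ℝ univ φ)
    (x y : EuclideanSpace ℝ (Fin d)) :
    φ y + fderiv ℝ φ y (x - y) ≤ φ x := by
  set g : ℝ → ℝ := fun t => φ (t • (x - y) + y) with hg
  have hgc : ConvexOn ℝ univ g := by
    have := hc.comp_affineMap (AffineMap.lineMap y x)
    simpa [Function.comp_def, AffineMap.lineMap_apply, g, vsub_eq_sub, vadd_eq_add] using this
  have hline : HasDerivAt (fun t : ℝ => t • (x - y) + y) (x - y) 0 := by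
    simpa using ((hasDerivAt_id (0:ℝ)).smul_const (x - y)).add_const y
  have hder : HasDerivAt g (fderiv ℝ φ y (x - y)) 0 := by
    have h := (hφ ((0:ℝ) • (x - y) + y)).hasFDerivAt.comp_hasDerivAt (0:ℝ) hline
    simpa [g, Function.comp_def, zero_smul, zero_add] using h
  have hs := hgc.le_slope_of_hasDerivAt (mem_univ (0:ℝ)) (mem_univ (1:ℝ)) one_pos hder
  have hsl : slope g 0 1 = φ x - φ y := by
    simp [slope_def_field, g]
  rw [hsl] at hs
  linarith

lemma aux_strong {d : ℕ} (f : EuclideanSpace ℝ (Fin d) → ℝ)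
    (hf : Differentiable ℝ f) (c : ℝ)
    (hc : ConvexOn ℝ univ (fun x => f x - c / 2 * ‖x‖ ^ 2))
    (x y : EuclideanSpace ℝ (Fin d)) :
    f y + ⟪gradient f y, x - y⟫ + c / 2 * ‖x - y‖ ^ 2 ≤ f x := by
  set D := (fderivInnerCLM ℝ (y, y)).comp
      ((ContinuousLinearMap.id ℝ (EuclideanSpace ℝ (Fin d))).prod
        (ContinuousLinearMap.id ℝ (EuclideanSpace ℝ (Fin d)))) with hD
  have hn : HasFDerivAt (fun z : EuclideanSpace ℝ (Fin d) => ⟪z, z⟫) D y :=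
    (hasFDerivAt_id y).inner ℝ (hasFDerivAt_id y)
  have hq : HasFDerivAt (fun z : EuclideanSpace ℝ (Fin d) => c / 2 * ‖z‖ ^ 2)
      ((c / 2) • D) y := by
    have h := hn.const_mul (c / 2)
    simpa only [real_inner_self_eq_norm_sq] using h
  have hqd : Differentiable ℝ (fun z : EuclideanSpace ℝ (Fin d) => c / 2 * ‖z‖ ^ 2) :=
    ((contDiff_norm_sq ℝ (n := 1)).differentiable one_ne_zero).const_mul (c / 2)
  have hφd : Differentiable ℝ (fun z : EuclideanSpace ℝ (Fin d) => f z - c / 2 * ‖z‖ ^ 2) :=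
    hf.sub hqd
  have key := aux_tangent _ hφd hc x y
  have hfd : HasFDerivAt (fun z : EuclideanSpace ℝ (Fin d) => f z - c / 2 * ‖z‖ ^ 2)
      (fderiv ℝ f y - (c / 2) • D) y := (hf y).hasFDerivAt.sub hq
  rw [hfd.fderiv] at key
  have hgrad : fderiv ℝ f y (x - y) = ⟪gradient f y, x - y⟫ := by
    have h := (hf y).hasGradientAt
    rw [hasGradientAt_iff_hasFDerivAt] at h
    rw [h.fderiv]
    simp [InnerProductSpace.toDual_apply_apply]
  have hDapp : D (x - y) = 2 * ⟪y, x - y⟫ := by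
    rw [hD, ContinuousLinearMap.comp_apply]
    simp only [ContinuousLinearMap.prod_apply, ContinuousLinearMap.id_apply,
      fderivInnerCLM_apply]
    rw [real_inner_comm (x - y) y]; ring
  have hexp : ‖x - y‖ ^ 2 = ‖x‖ ^ 2 - 2 * ⟪y, x - y⟫ - ‖y‖ ^ 2 := by
    have h1 := norm_sub_sq_real x y
    have h2 : ⟪y, x - y⟫ = ⟪x, y⟫ - ‖y‖ ^ 2 := by
      rw [inner_sub_right, real_inner_self_eq_norm_sq, real_inner_comm]
    rw [h2]
    linarith
  simp only [ContinuousLinearMap.sub_apply, ContinuousLinearMap.smul_apply, smul_eq_mul,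
    hgrad, hDapp] at key
  rw [hexp]
  linarith

theorem stmt_4 {d : ℕ} (f₁ f₂ : EuclideanSpace ℝ (Fin d) → ℝ) (μ₁ L₁ μ₂ L₂ : ℝ)
    (hf₁ : Differentiable ℝ f₁) (hf₂ : Differentiable ℝ f₂)
    (h₁ : μ₁ < L₁) (h₂ : μ₂ < L₂) (hsum : μ₁ + μ₂ ≥ 0)
    (hL₁ : ConvexOn ℝ univ (fun x => L₁ / 2 * ‖x‖ ^ 2 - f₁ x))
    (hμ₁ : ConvexOn ℝ univ (fun x => f₁ x - μ₁ / 2 * ‖x‖ ^ 2))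
    (hL₂ : ConvexOn ℝ univ (fun x => L₂ / 2 * ‖x‖ ^ 2 - f₂ x))
    (hμ₂ : ConvexOn ℝ univ (fun x => f₂ x - μ₂ / 2 * ‖x‖ ^ 2))
    (xk xk1 : EuclideanSpace ℝ (Fin d))
    (hDCA : gradient f₁ xk1 = gradient f₂ xk) :
    ((f₁ xk - f₂ xk) - (f₁ xk1 - f₂ xk1) ≥ (μ₁ + μ₂) / 2 * ‖xk - xk1‖ ^ 2) ∧
    ((f₁ xk - f₂ xk) ≥ (f₁ xk1 - f₂ xk1)) ∧
    (μ₁ + μ₂ > 0 → xk1 ≠ xk → (f₁ xk - f₂ xk) > (f₁ xk1 - f₂ xk1)) := by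
  have A1 := aux_strong f₁ hf₁ μ₁ hμ₁ xk xk1
  have A2 := aux_strong f₂ hf₂ μ₂ hμ₂ xk1 xk
  rw [hDCA] at A1
  have hswap : ⟪gradient f₂ xk, xk1 - xk⟫ = - ⟪gradient f₂ xk, xk - xk1⟫ := by
    rw [← inner_neg_right]; congr 1; abel
  have hnorm : ‖xk1 - xk‖ = ‖xk - xk1‖ := norm_sub_rev _ _
  rw [hswap, hnorm] at A2
  have main : (f₁ xk - f₂ xk) - (f₁ xk1 - f₂ xk1) ≥ (μ₁ + μ₂) / 2 * ‖xk - xk1‖ ^ 2 := by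
    linarith
  have hnn : (0:ℝ) ≤ ‖xk - xk1‖ ^ 2 := by positivity
  refine ⟨main, by nlinarith, fun hpos hne => ?_⟩
  have hlt : (0:ℝ) < ‖xk - xk1‖ ^ 2 := by
    have h0 : (0:ℝ) < ‖xk - xk1‖ :=
      norm_pos_iff.mpr (sub_ne_zero.mpr (Ne.symm hne))
    exact pow_pos h0 2
  nlinarith
end

section
/- Let f₁, f₂ : ℝ^d → ℝ be differentiable with curvatures in [μ₁, L₁] and [μ₂, L₂] respectively, where L₁ > μ₂ ≥ μ₁ ≥ 0 and μ₂ < L₂. Let x₀, x₁, x₂ satisfy ∇f₁(x₁) = ∇f₂(x₀) and ∇f₁(x₂) = ∇f₂(x₁). Then F(x₁) − F(x₂) ≥ μ₂(μ₂−μ₁)/(L₁−μ₁)·(1/2)‖x₀ − x₁‖² + (μ₂ + μ₁(L₁−μ₂)/(L₁−μ₁))·(1/2)‖x₁ − x₂‖², where F = f₁ − f₂. -/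
open Set
set_option maxHeartbeats 1000000

section Aux
open Filter
open scoped RealInnerProductSpace Topology

set_option linter.unusedSectionVars false
variable {E : Type*} [NormedAddCommGroup E] [InnerProductSpace ℝ E] [CompleteSpace E]

private lemma convex_tangent' (g : E → ℝ) (hc : ConvexOn ℝ univ g) (x v : E) (c : ℝ)
    (hd : HasDerivAt (fun t : ℝ => g (x + t • v)) c 0) : g x + c ≤ g (x + v) := by
  set φ : ℝ → ℝ := fun t => g (x + t • v) with hφ
  have key : ∀ t ∈ Ioc (0:ℝ) 1, slope φ 0 t ≤ g (x + v) - g x := by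
    intro t ht
    have hpt : (1 - t) • x + t • (x + v) = x + t • v := by
      rw [smul_add]; module
    have := hc.2 (mem_univ x) (mem_univ (x + v)) (by linarith [ht.2] : (0:ℝ) ≤ 1 - t)
      ht.1.le (by ring)
    rw [hpt] at this
    rw [slope_def_field, sub_zero, div_le_iff₀ ht.1]
    simp only [hφ, zero_smul, add_zero, smul_eq_mul] at *
    nlinarith [ht.1]
  have hslope : Tendsto (slope φ 0) (𝓝[>] 0) (𝓝 c) :=
    (hasDerivAt_iff_tendsto_slope.mp hd).mono_left
      (nhdsWithin_mono _ (fun t ht => ne_of_gt ht))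
  have : c ≤ g (x + v) - g x := by
    refine le_of_tendsto hslope ?_
    filter_upwards [Ioc_mem_nhdsGT_of_mem (by norm_num : (0:ℝ) ∈ Ico (0:ℝ) 1)] with t ht
    exact key t ht
  linarith

private lemma expand_sq' (x v : E) : ‖x + v‖^2 = ‖x‖^2 + 2*⟪x,v⟫ + ‖v‖^2 := by
  rw [← real_inner_self_eq_norm_sq, ← real_inner_self_eq_norm_sq, ← real_inner_self_eq_norm_sq,
    real_inner_add_add_self]

private lemma grad_lower (f : E → ℝ) (μ : ℝ) (x y gx : E) (hg : HasGradientAt f gx x)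
    (hc : ConvexOn ℝ univ (fun z => f z - μ / 2 * ‖z‖ ^ 2)) :
    f x + ⟪gx, y - x⟫ + μ / 2 * ‖y - x‖ ^ 2 ≤ f y := by
  set v := y - x with hv
  have hF : HasFDerivAt f (InnerProductSpace.toDual ℝ E gx) x :=
    hasGradientAt_iff_hasFDerivAt.mp hg
  have hline : HasDerivAt (fun t : ℝ => x + t • v) v 0 := by
    simpa using ((hasDerivAt_id (0:ℝ)).smul_const v).const_add x
  have hcomp : HasDerivAt (fun t : ℝ => f (x + t • v)) ⟪gx, v⟫ 0 := by
    have h0 : HasFDerivAt f (InnerProductSpace.toDual ℝ E gx) (x + (0:ℝ) • v) := by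
      simpa using hF
    have := h0.comp_hasDerivAt 0 hline
    simp only [InnerProductSpace.toDual_apply_apply] at this
    exact this
  have hnormfun : (fun t : ℝ => μ/2 * ‖x + t • v‖^2)
      = fun t => (μ/2*‖x‖^2 + (μ * ⟪x, v⟫) * t) + μ/2*‖v‖^2 * t^2 := by
    funext t
    have h1 : ‖x + t • v‖^2 = ‖x‖^2 + 2*(t*⟪x,v⟫) + t^2*‖v‖^2 := by
      rw [expand_sq', real_inner_smul_right, norm_smul]
      simp [Real.norm_eq_abs, mul_pow, sq_abs]
    rw [h1]; ring
  have hpoly : HasDerivAt (fun t : ℝ => μ/2 * ‖x + t • v‖^2) (μ * ⟪x, v⟫) 0 := by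
    rw [hnormfun]
    have h1 := ((hasDerivAt_id (0:ℝ)).const_mul (μ * ⟪x, v⟫)).const_add (μ/2*‖x‖^2)
    have h2 := (hasDerivAt_pow 2 (0:ℝ)).const_mul (μ/2*‖v‖^2)
    have := h1.add h2
    simp only [mul_one, id] at this ⊢
    convert this using 1
    case e'_4 => rfl
    case e'_5 => rfl
    case e'_8 => funext t; simp [Pi.add_apply]
    case e'_9 => simp
  have hd : HasDerivAt (fun t : ℝ => f (x + t • v) - μ/2 * ‖x + t • v‖^2)
      (⟪gx, v⟫ - μ * ⟪x, v⟫) 0 := hcomp.sub hpoly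
  have key := convex_tangent' (fun z => f z - μ/2 * ‖z‖^2) (by
      convert hc using 2 with z) x v _ hd
  have hxy : x + v = y := by rw [hv]; abel
  have hexp : ‖y‖^2 = ‖x‖^2 + 2*⟪x,v⟫ + ‖v‖^2 := by rw [← hxy]; exact expand_sq' x v
  rw [hxy] at key
  rw [hexp] at key
  linarith

private lemma grad_upper (f : E → ℝ) (L : ℝ) (x y gx : E) (hg : HasGradientAt f gx x)
    (hc : ConvexOn ℝ univ (fun z => L / 2 * ‖z‖ ^ 2 - f z)) :
    f y ≤ f x + ⟪gx, y - x⟫ + L / 2 * ‖y - x‖ ^ 2 := by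
  have hg' : HasGradientAt (fun z => -f z) (-gx) x := by
    rw [hasGradientAt_iff_hasFDerivAt] at hg ⊢
    rw [map_neg]
    exact hg.neg
  have hc' : ConvexOn ℝ univ (fun z => (fun z => -f z) z - (-L) / 2 * ‖z‖ ^ 2) := by
    convert hc using 2 with z; ring
  have := grad_lower (fun z => -f z) (-L) x y (-gx) hg' hc'
  simp only [inner_neg_left] at this
  linarith

end Aux

open scoped RealInnerProductSpace

theorem stmt_9 {d : ℕ} (f₁ f₂ : EuclideanSpace ℝ (Fin d) → ℝ) (μ₁ L₁ μ₂ L₂ : ℝ)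
    (hf₁ : Differentiable ℝ f₁) (hf₂ : Differentiable ℝ f₂)
    (hL₁ : L₁ > μ₂) (hμ₂₁ : μ₂ ≥ μ₁) (hμ₁ : μ₁ ≥ 0) (h₂ : μ₂ < L₂)
    (hcL₁ : ConvexOn ℝ univ (fun x => L₁ / 2 * ‖x‖ ^ 2 - f₁ x))
    (hcμ₁ : ConvexOn ℝ univ (fun x => f₁ x - μ₁ / 2 * ‖x‖ ^ 2))
    (hcL₂ : ConvexOn ℝ univ (fun x => L₂ / 2 * ‖x‖ ^ 2 - f₂ x))
    (hcμ₂ : ConvexOn ℝ univ (fun x => f₂ x - μ₂ / 2 * ‖x‖ ^ 2))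
    (x₀ x₁ x₂ : EuclideanSpace ℝ (Fin d))
    (hDCA₀ : gradient f₁ x₁ = gradient f₂ x₀)
    (hDCA₁ : gradient f₁ x₂ = gradient f₂ x₁) :
    (f₁ x₁ - f₂ x₁) - (f₁ x₂ - f₂ x₂) ≥
      μ₂ * (μ₂ - μ₁) / (L₁ - μ₁) * (1 / 2) * ‖x₀ - x₁‖ ^ 2 +
      (μ₂ + μ₁ * (L₁ - μ₂) / (L₁ - μ₁)) * (1 / 2) * ‖x₁ - x₂‖ ^ 2 := by
  have hL₁μ₁ : (0:ℝ) < L₁ - μ₁ := by linarith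
  set w := x₁ - x₂ with hw
  set u := x₀ - x₁ with hu
  set s : ℝ := (L₁ - μ₁)⁻¹ with hs_def
  have hs : s * (L₁ - μ₁) = 1 := inv_mul_cancel₀ (ne_of_gt hL₁μ₁)
  have hs_pos : 0 < s := inv_pos.mpr hL₁μ₁
  set G₀ := gradient f₂ x₀ with hG₀
  set G₁ := gradient f₂ x₁ with hG₁
  set h := G₀ - G₁ - μ₁ • w with hh
  set z := x₁ - s • h with hz
  have hgrad1 : HasGradientAt f₁ G₀ x₁ := hDCA₀ ▸ (hf₁ x₁).hasGradientAt
  have hgrad2 : HasGradientAt f₁ G₁ x₂ := hDCA₁ ▸ (hf₁ x₂).hasGradientAt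
  have hgrad0 : HasGradientAt f₂ G₀ x₀ := (hf₂ x₀).hasGradientAt
  have hgrad1' : HasGradientAt f₂ G₁ x₁ := (hf₂ x₁).hasGradientAt
  have ia := grad_lower f₁ μ₁ x₂ z G₁ hgrad2 hcμ₁
  have ib := grad_upper f₁ L₁ x₁ z G₀ hgrad1 hcL₁
  have ic := grad_lower f₂ μ₂ x₁ x₂ G₁ hgrad1' hcμ₂
  have id1 := grad_lower f₂ μ₂ x₀ x₁ G₀ hgrad0 hcμ₂
  have id2 := grad_lower f₂ μ₂ x₁ x₀ G₁ hgrad1' hcμ₂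
  -- vector identities
  have hz2 : z - x₂ = w - s • h := by rw [hz, hw]; abel
  have hz1 : z - x₁ = -(s • h) := by rw [hz]; abel
  have hABu : G₀ - G₁ = h + μ₁ • w := by rw [hh]; abel
  -- scalar expansions
  have e1 : ⟪G₁, z - x₂⟫ = ⟪G₁, w⟫ - s * ⟪G₁, h⟫ := by
    rw [hz2, inner_sub_right, real_inner_smul_right]
  have e2 : ⟪G₀, z - x₁⟫ = -(s * ⟪G₀, h⟫) := by
    rw [hz1, inner_neg_right, real_inner_smul_right]
  have e3 : ‖z - x₂‖^2 = ‖w‖^2 - 2*(s*⟪w,h⟫) + s^2*‖h‖^2 := by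
    rw [hz2, norm_sub_sq_real, real_inner_smul_right, norm_smul]
    simp [Real.norm_eq_abs, mul_pow, sq_abs]
  have e4 : ‖z - x₁‖^2 = s^2*‖h‖^2 := by
    rw [hz1, norm_neg, norm_smul]
    simp [Real.norm_eq_abs, mul_pow, sq_abs]
  have e5 : ⟪G₀, h⟫ - ⟪G₁, h⟫ = ‖h‖^2 + μ₁*⟪w,h⟫ := by
    rw [← inner_sub_left, hABu, inner_add_left, real_inner_smul_left,
      real_inner_self_eq_norm_sq]
  have e5s : s*⟪G₀,h⟫ - s*⟪G₁,h⟫ = s*‖h‖^2 + μ₁*(s*⟪w,h⟫) := by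
    linear_combination s * e5
  have hs2 : s^2*((L₁-μ₁)*‖h‖^2) = s*‖h‖^2 := by
    linear_combination s*‖h‖^2*hs
  have key1 : f₁ x₁ - f₁ x₂ ≥ ⟪G₁,w⟫ + μ₁/2*‖w‖^2 + s/2*‖h‖^2 := by
    rw [e1, e3] at ia
    rw [e2, e4] at ib
    linarith [ia, ib, e5s, hs2]
  have hwneg : x₂ - x₁ = -w := by rw [hw]; abel
  have ic' : f₂ x₁ - f₂ x₂ ≤ ⟪G₁,w⟫ - μ₂/2*‖w‖^2 := by
    rw [hwneg, inner_neg_right, norm_neg] at ic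
    linarith
  have huneg : x₁ - x₀ = -u := by rw [hu]; abel
  have hdmono : ⟪G₀,u⟫ - ⟪G₁,u⟫ ≥ μ₂*‖u‖^2 := by
    rw [huneg, inner_neg_right, norm_neg] at id1
    rw [← hu] at id2
    linarith
  -- step 2
  have hu_eq : ⟪h, u⟫ = (⟪G₀,u⟫ - ⟪G₁,u⟫) - μ₁*⟪w,u⟫ := by
    rw [hh, inner_sub_left, inner_sub_left, real_inner_smul_left]
  have hexp2 : ‖h - (μ₂-μ₁) • u‖^2 = ‖h‖^2 - 2*((μ₂-μ₁)*⟪h,u⟫) + (μ₂-μ₁)^2*‖u‖^2 := by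
    rw [norm_sub_sq_real, real_inner_smul_right, norm_smul]
    simp [Real.norm_eq_abs, mul_pow, sq_abs]
  have hlam : (0:ℝ) ≤ μ₂ - μ₁ := by linarith
  have cs : ⟪w,u⟫ ≤ ‖w‖*‖u‖ := real_inner_le_norm w u
  have hnn : (0:ℝ) ≤ ‖h - (μ₂-μ₁) • u‖^2 := by positivity
  have t1 : ‖h‖^2 ≥ 2*((μ₂-μ₁)*⟪h,u⟫) - (μ₂-μ₁)^2*‖u‖^2 := by
    rw [hexp2] at hnn; linarith
  have t2 : (μ₂-μ₁)*⟪h,u⟫ ≥ (μ₂-μ₁)*(μ₂*‖u‖^2 - μ₁*⟪w,u⟫) := by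
    apply mul_le_mul_of_nonneg_left _ hlam
    rw [hu_eq]
    nlinarith [hdmono]
  have t3 : (μ₂-μ₁)*μ₁*⟪w,u⟫ ≤ (μ₂-μ₁)*μ₁*(‖w‖*‖u‖) :=
    mul_le_mul_of_nonneg_left cs (mul_nonneg hlam hμ₁)
  have t4 : (μ₂-μ₁)*μ₁*(2*(‖w‖*‖u‖)) ≤ (μ₂-μ₁)*μ₁*(‖u‖^2+‖w‖^2) := by
    apply mul_le_mul_of_nonneg_left _ (mul_nonneg hlam hμ₁)
    nlinarith [sq_nonneg (‖u‖-‖w‖)]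
  have step2 : ‖h‖^2 ≥ (μ₂-μ₁)*(μ₂*‖u‖^2 - μ₁*‖w‖^2) := by linarith [t1, t2, t3, t4]
  -- combine
  have hF : (f₁ x₁ - f₂ x₁) - (f₁ x₂ - f₂ x₂) ≥ (μ₁+μ₂)/2*‖w‖^2 + s/2*‖h‖^2 := by
    linarith [key1, ic']
  have hmain : s/2*‖h‖^2 ≥ s/2*((μ₂-μ₁)*(μ₂*‖u‖^2 - μ₁*‖w‖^2)) :=
    mul_le_mul_of_nonneg_left step2 (by positivity)
  have heq : μ₂ * (μ₂ - μ₁) / (L₁ - μ₁) * (1 / 2) * ‖u‖ ^ 2 +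
      (μ₂ + μ₁ * (L₁ - μ₂) / (L₁ - μ₁)) * (1 / 2) * ‖w‖ ^ 2
      = (μ₁+μ₂)/2*‖w‖^2 + s/2*((μ₂-μ₁)*(μ₂*‖u‖^2 - μ₁*‖w‖^2)) := by
    rw [hs_def]
    field_simp
    ring
  rw [heq]
  linarith [hF, hmain]
end

section
/- Let f₁, f₂ : ℝ^d → ℝ be differentiable with curvatures in [μ₁, L₁] and [μ₂, L₂] respectively, where L₂ > μ₁ > 0, μ₂ ∈ [−L₂μ₁/(L₂+μ₁), 0), μ₁ + μ₂ > 0 and μ₁ < L₁. Let x₀, x₁, x₂ satisfy ∇f₁(x₁) = ∇f₂(x₀) and ∇f₁(x₂) = ∇f₂(x₁). Then F(x₀) − F(x₁) ≥ (μ₁ + L₂μ₂/(L₂+μ₂))·(1/2)‖x₀ − x₁‖² + (μ₁²/(2(L₂+μ₂)))‖x₁ − x₂‖², where F = f₁ − f₂. -/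
open Set InnerProductSpace
open scoped RealInnerProductSpace

section Aux

variable {F : Type*} [NormedAddCommGroup F] [InnerProductSpace ℝ F] [CompleteSpace F]

/-- Gradient inequality for a differentiable convex function. -/
lemma grad_ineq_aux {h : F → ℝ} (hd : Differentiable ℝ h) (hc : ConvexOn ℝ univ h)
    (x y : F) : h x + ⟪gradient h x, y - x⟫ ≤ h y := by
  have hgrad : ⟪gradient h x, y - x⟫ = fderiv ℝ h x (y - x) := toDual_symm_apply
  rcases eq_or_ne y x with rfl | hne
  · simp [hgrad]
  · have hcurve : ∀ τ : ℝ, HasDerivAt (fun t : ℝ => x + t • (y - x)) (y - x) τ := by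
      intro τ
      simpa using ((hasDerivAt_id τ).smul_const (y - x)).const_add x
    have hφ : HasDerivAt (fun t : ℝ => h (x + t • (y - x))) (fderiv ℝ h x (y - x)) 0 := by
      have h0 : x + (0:ℝ) • (y - x) = x := by simp
      have := (hd (x + (0:ℝ) • (y - x))).hasFDerivAt.comp_hasDerivAt 0 (hcurve 0)
      rw [h0] at this
      exact this
    have hconv : ConvexOn ℝ univ (fun t : ℝ => h (x + t • (y - x))) := by
      have h1 := hc.comp_affineMap (AffineMap.lineMap x y : ℝ →ᵃ[ℝ] F)
      have h2 : (fun t : ℝ => h (x + t • (y - x))) = h ∘ (AffineMap.lineMap x y : ℝ →ᵃ[ℝ] F) := by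
        funext t
        simp only [Function.comp_apply, AffineMap.lineMap_apply_module]
        exact congrArg h (by module)
      rw [h2]
      simpa using h1
    have hslope := hconv.le_slope_of_hasDerivAt (mem_univ (0:ℝ)) (mem_univ (1:ℝ)) one_pos hφ
    rw [slope_def_field] at hslope
    have e1 : x + (1:ℝ) • (y - x) = y := by module
    have e0 : x + (0:ℝ) • (y - x) = x := by simp
    rw [e1, e0] at hslope
    rw [hgrad]
    have : fderiv ℝ h x (y - x) ≤ h y - h x := by
      calc fderiv ℝ h x (y - x) ≤ (h y - h x) / (1 - 0) := hslope
        _ = h y - h x := by norm_num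
    linarith

/-- Gradient of `f x - m/2 ‖x‖²`. -/
lemma grad_sub_sq {f : F → ℝ} {w : F} (hf : DifferentiableAt ℝ f w) (m : ℝ) :
    gradient (fun x => f x - m / 2 * ‖x‖ ^ 2) w = gradient f w - m • w := by
  have h1 : HasFDerivAt (fun x : F => f x - m / 2 * ‖x‖ ^ 2)
      (fderiv ℝ f w - (m / 2) • (2 • innerSL ℝ w)) w :=
    hf.hasFDerivAt.sub ((hasStrictFDerivAt_norm_sq w).hasFDerivAt.const_mul (m / 2))
  have h2 : fderiv ℝ f w - (m / 2) • (2 • innerSL ℝ w) = toDual ℝ F (gradient f w - m • w) := by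
    ext v
    have hfd : fderiv ℝ f w v = ⟪gradient f w, v⟫ := (toDual_symm_apply).symm
    simp only [ContinuousLinearMap.coe_sub', Pi.sub_apply, ContinuousLinearMap.coe_smul',
      Pi.smul_apply, toDual_apply_apply, inner_sub_left, real_inner_smul_left, hfd,
      ContinuousLinearMap.smul_apply, innerSL_apply_apply, smul_eq_mul]
    ring
  rw [h2] at h1
  simpa only [LinearIsometryEquiv.symm_apply_apply] using h1.hasGradientAt.gradient

/-- Gradient of `L/2 ‖x‖² - f x`. -/
lemma grad_sq_sub {f : F → ℝ} {w : F} (hf : DifferentiableAt ℝ f w) (L : ℝ) :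
    gradient (fun x => L / 2 * ‖x‖ ^ 2 - f x) w = L • w - gradient f w := by
  have h1 : HasFDerivAt (fun x : F => L / 2 * ‖x‖ ^ 2 - f x)
      ((L / 2) • (2 • innerSL ℝ w) - fderiv ℝ f w) w :=
    ((hasStrictFDerivAt_norm_sq w).hasFDerivAt.const_mul (L / 2)).sub hf.hasFDerivAt
  have h2 : (L / 2) • (2 • innerSL ℝ w) - fderiv ℝ f w = toDual ℝ F (L • w - gradient f w) := by
    ext v
    have hfd : fderiv ℝ f w v = ⟪gradient f w, v⟫ := (toDual_symm_apply).symm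
    simp only [ContinuousLinearMap.coe_sub', Pi.sub_apply, ContinuousLinearMap.coe_smul',
      Pi.smul_apply, toDual_apply_apply, inner_sub_left, real_inner_smul_left, hfd,
      ContinuousLinearMap.smul_apply, innerSL_apply_apply, smul_eq_mul]
    ring
  rw [h2] at h1
  simpa only [LinearIsometryEquiv.symm_apply_apply] using h1.hasGradientAt.gradient

/-- Descent lemma (upper quadratic bound) for an `L`-smooth function. -/
lemma smooth_ineq {f : F → ℝ} {L : ℝ} (hf : Differentiable ℝ f)
    (hcL : ConvexOn ℝ univ (fun x => L / 2 * ‖x‖ ^ 2 - f x)) (x y : F) :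
    f y ≤ f x + ⟪gradient f x, y - x⟫ + L / 2 * ‖y - x‖ ^ 2 := by
  have hd : Differentiable ℝ (fun x : F => L / 2 * ‖x‖ ^ 2 - f x) := by
    intro w
    exact (((hasStrictFDerivAt_norm_sq w).hasFDerivAt.const_mul (L / 2)).sub
      (hf w).hasFDerivAt).differentiableAt
  have key := grad_ineq_aux hd hcL x y
  rw [grad_sq_sub (hf x) L] at key
  have e1 : ⟪L • x - gradient f x, y - x⟫ = L * ⟪x, y - x⟫ - ⟪gradient f x, y - x⟫ := by
    rw [inner_sub_left, real_inner_smul_left]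
  have e2 : ⟪x, y - x⟫ = ⟪x, y⟫ - ‖x‖ ^ 2 := by
    rw [inner_sub_right, real_inner_self_eq_norm_sq]
  have e3 : ‖y - x‖ ^ 2 = ‖y‖ ^ 2 - 2 * ⟪x, y⟫ + ‖x‖ ^ 2 := by
    rw [norm_sub_sq_real, real_inner_comm]
  have e4 : L / 2 * ‖y - x‖ ^ 2 = L / 2 * ‖y‖ ^ 2 - L * ⟪x, y⟫ + L / 2 * ‖x‖ ^ 2 := by
    linear_combination (L / 2) * e3
  have e5 : L * ⟪x, y - x⟫ = L * ⟪x, y⟫ - L * ‖x‖ ^ 2 := by linear_combination L * e2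
  rw [e1] at key
  linarith

/-- Lower quadratic bound for an `m`-strongly convex function. -/
lemma strong_ineq {f : F → ℝ} {m : ℝ} (hf : Differentiable ℝ f)
    (hcm : ConvexOn ℝ univ (fun x => f x - m / 2 * ‖x‖ ^ 2)) (x y : F) :
    f x + ⟪gradient f x, y - x⟫ + m / 2 * ‖y - x‖ ^ 2 ≤ f y := by
  have hd : Differentiable ℝ (fun x : F => f x - m / 2 * ‖x‖ ^ 2) := by
    intro w
    exact ((hf w).hasFDerivAt.sub
      ((hasStrictFDerivAt_norm_sq w).hasFDerivAt.const_mul (m / 2))).differentiableAt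
  have key := grad_ineq_aux hd hcm x y
  rw [grad_sub_sq (hf x) m] at key
  have e1 : ⟪gradient f x - m • x, y - x⟫ = ⟪gradient f x, y - x⟫ - m * ⟪x, y - x⟫ := by
    rw [inner_sub_left, real_inner_smul_left]
  have e2 : ⟪x, y - x⟫ = ⟪x, y⟫ - ‖x‖ ^ 2 := by
    rw [inner_sub_right, real_inner_self_eq_norm_sq]
  have e3 : ‖y - x‖ ^ 2 = ‖y‖ ^ 2 - 2 * ⟪x, y⟫ + ‖x‖ ^ 2 := by
    rw [norm_sub_sq_real, real_inner_comm]
  have e4 : m / 2 * ‖y - x‖ ^ 2 = m / 2 * ‖y‖ ^ 2 - m * ⟪x, y⟫ + m / 2 * ‖x‖ ^ 2 := by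
    linear_combination (m / 2) * e3
  have e5 : m * ⟪x, y - x⟫ = m * ⟪x, y⟫ - m * ‖x‖ ^ 2 := by linear_combination m * e2
  rw [e1] at key
  linarith

/-- Cocoercivity for a convex `L`-smooth function. -/
lemma coco_ineq {f : F → ℝ} {L : ℝ} (hL : 0 < L) (hf : Differentiable ℝ f)
    (hc : ConvexOn ℝ univ f) (hcL : ConvexOn ℝ univ (fun x => L / 2 * ‖x‖ ^ 2 - f x))
    (x y : F) :
    f x + ⟪gradient f x, y - x⟫ + 1 / (2 * L) * ‖gradient f y - gradient f x‖ ^ 2 ≤ f y := by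
  set u := gradient f y - gradient f x with hu
  set z := y - (1 / L) • u with hz
  have h1 := grad_ineq_aux hf hc x z
  have h2 := smooth_ineq hf hcL y z
  have ezx : z - x = (y - x) - (1 / L) • u := by rw [hz]; module
  have ezy : z - y = -((1 / L) • u) := by rw [hz]; module
  have e1 : ⟪gradient f x, z - x⟫ = ⟪gradient f x, y - x⟫ - 1 / L * ⟪gradient f x, u⟫ := by
    rw [ezx, inner_sub_right, real_inner_smul_right]
  have e2 : ⟪gradient f y, z - y⟫ = -(1 / L * ⟪gradient f y, u⟫) := by
    rw [ezy, inner_neg_right, real_inner_smul_right]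
  have e3 : L / 2 * ‖z - y‖ ^ 2 = 1 / (2 * L) * ‖u‖ ^ 2 := by
    rw [ezy, norm_neg, norm_smul, Real.norm_eq_abs, mul_pow, sq_abs]
    field_simp
  have e4 : 1 / L * ⟪gradient f y, u⟫ - 1 / L * ⟪gradient f x, u⟫ = 1 / L * ‖u‖ ^ 2 := by
    rw [← mul_sub, ← inner_sub_left, ← hu, real_inner_self_eq_norm_sq]
  have e5 : 1 / L * ‖u‖ ^ 2 - 1 / (2 * L) * ‖u‖ ^ 2 = 1 / (2 * L) * ‖u‖ ^ 2 := by
    field_simp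
    ring
  rw [e1] at h1
  rw [e2, e3] at h2
  linarith

/-- Interpolation inequality for a function with curvature in `[m, L]`. -/
lemma interp_ineq {f : F → ℝ} {m L : ℝ} (hmL : m < L) (hf : Differentiable ℝ f)
    (hcm : ConvexOn ℝ univ (fun x => f x - m / 2 * ‖x‖ ^ 2))
    (hcL : ConvexOn ℝ univ (fun x => L / 2 * ‖x‖ ^ 2 - f x)) (x y : F) :
    f x + ⟪gradient f x, y - x⟫ + m / 2 * ‖y - x‖ ^ 2
      + 1 / (2 * (L - m)) * ‖gradient f y - gradient f x - m • (y - x)‖ ^ 2 ≤ f y := by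
  set φ : F → ℝ := fun x => f x - m / 2 * ‖x‖ ^ 2 with hφ
  have hdφ : Differentiable ℝ φ := by
    intro w
    exact ((hf w).hasFDerivAt.sub
      ((hasStrictFDerivAt_norm_sq w).hasFDerivAt.const_mul (m / 2))).differentiableAt
  have hcLφ : ConvexOn ℝ univ (fun x => (L - m) / 2 * ‖x‖ ^ 2 - φ x) := by
    have : (fun x : F => (L - m) / 2 * ‖x‖ ^ 2 - φ x)
        = (fun x : F => L / 2 * ‖x‖ ^ 2 - f x) := by
      funext w
      simp only [hφ]
      ring
    rw [this]
    exact hcL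
  have key := coco_ineq (by linarith : (0:ℝ) < L - m) hdφ hcm hcLφ x y
  have egx : gradient φ x = gradient f x - m • x := grad_sub_sq (hf x) m
  have egy : gradient φ y = gradient f y - m • y := grad_sub_sq (hf y) m
  rw [egx, egy] at key
  have ev : gradient f y - m • y - (gradient f x - m • x)
      = gradient f y - gradient f x - m • (y - x) := by module
  rw [ev] at key
  have e1 : ⟪gradient f x - m • x, y - x⟫ = ⟪gradient f x, y - x⟫ - m * ⟪x, y - x⟫ := by
    rw [inner_sub_left, real_inner_smul_left]
  have e2 : ⟪x, y - x⟫ = ⟪x, y⟫ - ‖x‖ ^ 2 := by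
    rw [inner_sub_right, real_inner_self_eq_norm_sq]
  have e3 : ‖y - x‖ ^ 2 = ‖y‖ ^ 2 - 2 * ⟪x, y⟫ + ‖x‖ ^ 2 := by
    rw [norm_sub_sq_real, real_inner_comm]
  have e4 : m / 2 * ‖y - x‖ ^ 2 = m / 2 * ‖y‖ ^ 2 - m * ⟪x, y⟫ + m / 2 * ‖x‖ ^ 2 := by
    linear_combination (m / 2) * e3
  have e5 : m * ⟪x, y - x⟫ = m * ⟪x, y⟫ - m * ‖x‖ ^ 2 := by linear_combination m * e2
  rw [e1] at key
  simp only [hφ] at key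
  linarith

end Aux

set_option maxHeartbeats 1000000 in
theorem stmt_10 {d : ℕ} (f₁ f₂ : EuclideanSpace ℝ (Fin d) → ℝ) (μ₁ L₁ μ₂ L₂ : ℝ)
    (hf₁ : Differentiable ℝ f₁) (hf₂ : Differentiable ℝ f₂)
    (hL₂ : L₂ > μ₁) (hμ₁ : μ₁ > 0)
    (hμ₂ : μ₂ ∈ Set.Ico (-L₂ * μ₁ / (L₂ + μ₁)) 0)
    (hsum : μ₁ + μ₂ > 0) (h₁ : μ₁ < L₁)
    (hcL₁ : ConvexOn ℝ univ (fun x => L₁ / 2 * ‖x‖ ^ 2 - f₁ x))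
    (hcμ₁ : ConvexOn ℝ univ (fun x => f₁ x - μ₁ / 2 * ‖x‖ ^ 2))
    (hcL₂ : ConvexOn ℝ univ (fun x => L₂ / 2 * ‖x‖ ^ 2 - f₂ x))
    (hcμ₂ : ConvexOn ℝ univ (fun x => f₂ x - μ₂ / 2 * ‖x‖ ^ 2))
    (x₀ x₁ x₂ : EuclideanSpace ℝ (Fin d))
    (hDCA₀ : gradient f₁ x₁ = gradient f₂ x₀)
    (hDCA₁ : gradient f₁ x₂ = gradient f₂ x₁) :
    (f₁ x₀ - f₂ x₀) - (f₁ x₁ - f₂ x₁) ≥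
      (μ₁ + L₂ * μ₂ / (L₂ + μ₂)) * (1 / 2) * ‖x₀ - x₁‖ ^ 2 +
      μ₁ ^ 2 / (2 * (L₂ + μ₂)) * ‖x₁ - x₂‖ ^ 2 := by
  have hμ₂neg : μ₂ < 0 := hμ₂.2
  have hK : (0:ℝ) < L₂ + μ₂ := by linarith
  have hM : (0:ℝ) < L₂ - μ₂ := by linarith
  -- I1 : strong convexity of f₁ between x₁ and x₀
  have I1 := strong_ineq hf₁ hcμ₁ x₁ x₀
  -- I2, I3 : strong convexity of f₁ between x₁ and x₂
  have I2 := strong_ineq hf₁ hcμ₁ x₁ x₂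
  have I3 := strong_ineq hf₁ hcμ₁ x₂ x₁
  -- I4, I5 : interpolation for f₂ between x₀ and x₁
  have I4 := interp_ineq (by linarith : μ₂ < L₂) hf₂ hcμ₂ hcL₂ x₀ x₁
  have I5 := interp_ineq (by linarith : μ₂ < L₂) hf₂ hcμ₂ hcL₂ x₁ x₀
  rw [← hDCA₀, ← hDCA₁] at I4 I5
  set a := gradient f₁ x₁ with ha
  set b := gradient f₁ x₂ with hb
  -- rewrite vector arguments
  have ev4 : b - a - μ₂ • (x₁ - x₀) = b - a + μ₂ • (x₀ - x₁) := by module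
  have ev5 : a - b - μ₂ • (x₀ - x₁) = -(b - a + μ₂ • (x₀ - x₁)) := by module
  rw [ev4] at I4
  rw [ev5, norm_neg] at I5
  -- scalar atom conversions
  have eT : ‖x₂ - x₁‖ ^ 2 = ‖x₁ - x₂‖ ^ 2 := by rw [norm_sub_rev]
  have eγ : ⟪a, x₂ - x₁⟫ = -⟪a, x₁ - x₂⟫ := by
    rw [← neg_sub x₁ x₂, inner_neg_right]
  have eS : ‖x₁ - x₀‖ ^ 2 = ‖x₀ - x₁‖ ^ 2 := by rw [norm_sub_rev]
  have eα : ⟪a, x₁ - x₀⟫ = -⟪a, x₀ - x₁⟫ := by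
    rw [← neg_sub x₀ x₁, inner_neg_right]
  rw [eT, eγ] at I2
  rw [eS, eα] at I4
  -- expansions of the squared norms
  have hPexp : ‖b - a + μ₂ • (x₀ - x₁)‖ ^ 2
      = ‖b - a‖ ^ 2 + 2 * μ₂ * (⟪b, x₀ - x₁⟫ - ⟪a, x₀ - x₁⟫) + μ₂ ^ 2 * ‖x₀ - x₁‖ ^ 2 := by
    rw [norm_add_sq_real, real_inner_smul_right, inner_sub_left, norm_smul,
      Real.norm_eq_abs, mul_pow, sq_abs]
    ring
  have hRexp : ‖b - a + μ₁ • (x₁ - x₂)‖ ^ 2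
      = ‖b - a‖ ^ 2 + 2 * μ₁ * (⟪b, x₁ - x₂⟫ - ⟪a, x₁ - x₂⟫) + μ₁ ^ 2 * ‖x₁ - x₂‖ ^ 2 := by
    rw [norm_add_sq_real, real_inner_smul_right, inner_sub_left, norm_smul,
      Real.norm_eq_abs, mul_pow, sq_abs]
    ring
  rw [hPexp] at I4 I5
  have hR : (0:ℝ) ≤ ‖b - a‖ ^ 2 + 2 * μ₁ * (⟪b, x₁ - x₂⟫ - ⟪a, x₁ - x₂⟫)
      + μ₁ ^ 2 * ‖x₁ - x₂‖ ^ 2 := by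
    rw [← hRexp]
    positivity
  -- abbreviations
  set A1 := ⟪a, x₀ - x₁⟫ with hA1
  set B1 := ⟪b, x₀ - x₁⟫ with hB1
  set A2 := ⟪a, x₁ - x₂⟫ with hA2
  set B2 := ⟪b, x₁ - x₂⟫ with hB2
  set S := ‖x₀ - x₁‖ ^ 2 with hS
  set T := ‖x₁ - x₂‖ ^ 2 with hT
  set G := ‖b - a‖ ^ 2 with hG
  have hKne : L₂ + μ₂ ≠ 0 := ne_of_gt hK
  have hMne : L₂ - μ₂ ≠ 0 := ne_of_gt hM
  have key : (f₁ x₀ - f₂ x₀) - (f₁ x₁ - f₂ x₁)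
      - ((μ₁ + L₂ * μ₂ / (L₂ + μ₂)) * (1 / 2) * S + μ₁ ^ 2 / (2 * (L₂ + μ₂)) * T)
      = (f₁ x₀ - (f₁ x₁ + A1 + μ₁ / 2 * S))
      + μ₁ / (L₂ + μ₂) * ((f₁ x₂ - (f₁ x₁ + -A2 + μ₁ / 2 * T))
          + (f₁ x₁ - (f₁ x₂ + B2 + μ₁ / 2 * T)))
      + L₂ / (L₂ + μ₂) * (f₂ x₁ - (f₂ x₀ + -A1 + μ₂ / 2 * S
          + 1 / (2 * (L₂ - μ₂)) * (G + 2 * μ₂ * (B1 - A1) + μ₂ ^ 2 * S)))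
      + (-μ₂) / (L₂ + μ₂) * (f₂ x₀ - (f₂ x₁ + B1 + μ₂ / 2 * S
          + 1 / (2 * (L₂ - μ₂)) * (G + 2 * μ₂ * (B1 - A1) + μ₂ ^ 2 * S)))
      + 1 / (2 * (L₂ + μ₂)) * (G + 2 * μ₁ * (B2 - A2) + μ₁ ^ 2 * T) := by
    field_simp
    ring
  have t1 : (0:ℝ) ≤ f₁ x₀ - (f₁ x₁ + A1 + μ₁ / 2 * S) := by linarith
  have t2 : (0:ℝ) ≤ (f₁ x₂ - (f₁ x₁ + -A2 + μ₁ / 2 * T))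
      + (f₁ x₁ - (f₁ x₂ + B2 + μ₁ / 2 * T)) := by linarith
  have t4 : (0:ℝ) ≤ f₂ x₁ - (f₂ x₀ + -A1 + μ₂ / 2 * S
      + 1 / (2 * (L₂ - μ₂)) * (G + 2 * μ₂ * (B1 - A1) + μ₂ ^ 2 * S)) := by linarith
  have t5 : (0:ℝ) ≤ f₂ x₀ - (f₂ x₁ + B1 + μ₂ / 2 * S
      + 1 / (2 * (L₂ - μ₂)) * (G + 2 * μ₂ * (B1 - A1) + μ₂ ^ 2 * S)) := by linarith
  have m2 : (0:ℝ) ≤ μ₁ / (L₂ + μ₂) := by positivity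
  have m4 : (0:ℝ) ≤ L₂ / (L₂ + μ₂) := by
    apply div_nonneg <;> linarith
  have m5 : (0:ℝ) ≤ (-μ₂) / (L₂ + μ₂) := by
    apply div_nonneg <;> linarith
  have m6 : (0:ℝ) ≤ 1 / (2 * (L₂ + μ₂)) := by positivity
  linarith [mul_nonneg m2 t2, mul_nonneg m4 t4, mul_nonneg m5 t5, mul_nonneg m6 hR, key, t1]
end

section
/- Let f₁, f₂ : ℝ^d → ℝ be differentiable with curvatures in [μ₁, L₁] and [μ₂, L₂] respectively, where L₂ > μ₁ ≥ μ₂ ≥ 0, μ₁ + μ₂ > 0, μ₁ < L₁. Let x⁰, x¹, …, x^{N+1} be generated by DCA, i.e., ∇f₁(x^{k+1}) = ∇f₂(x^k) for k = 0, …, N, with N ≥ 1. Then (1/2)·min_{0 ≤ k ≤ N} ‖x^k − x^{k+1}‖² ≤ (F(x⁰) − F(x^{N+1})) / ((μ₁+μ₂) + (μ₁ + μ₂ + (μ₁−μ₂)²/(L₂−μ₂))·N), where F = f₁ − f₂. -/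
open Set Topology Filter

set_option maxHeartbeats 1000000 in

lemma key (μ₁ μ₂ L s a b T : ℝ) (h2 : 0 ≤ μ₂) (h12 : μ₂ ≤ μ₁) (hL : μ₁ < L)
    (hs : 0 ≤ s) (ha : s ≤ a) (hb : s ≤ b) (hT0 : 0 ≤ T)
    (hT : μ₁ * b ^ 2 - μ₂ * (a * b) ≤ T * b) :
    (μ₁ - μ₂) ^ 2 * s ^ 2 ≤ (μ₁ + μ₂) * (L - μ₂) * (a ^ 2 - s ^ 2) + T ^ 2 := by
  have hμ₁ : 0 ≤ μ₁ := le_trans h2 h12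
  have has : s ^ 2 ≤ a ^ 2 := by nlinarith
  have hq : 0 ≤ (μ₁ + μ₂) * (L - μ₂) * (a ^ 2 - s ^ 2) := by
    apply mul_nonneg (mul_nonneg (by linarith) (by linarith)); linarith
  rcases le_or_gt ((μ₁ - μ₂) * s) T with h | h
  · nlinarith [mul_self_le_mul_self (mul_nonneg (by linarith : (0:ℝ) ≤ μ₁ - μ₂) hs) h]
  · rcases eq_or_lt_of_le (le_trans hs hb) with hb0 | hb0
    · have hs0 : s = 0 := le_antisymm (hb0 ▸ hb) hs
      nlinarith [sq_nonneg T]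
    · have hT' : μ₁ * b - μ₂ * a ≤ T := by nlinarith
      rcases le_or_gt (μ₁ * s) (μ₂ * a) with h2a | h2b
      · have hms : (μ₁ * s) ^ 2 ≤ (μ₂ * a) ^ 2 := by
          nlinarith [mul_self_le_mul_self (mul_nonneg hμ₁ hs) h2a]
        rcases eq_or_lt_of_le h2 with hz | hz
        · nlinarith [sq_nonneg T]
        · have e1 : (μ₁^2 - μ₂^2) * s^2 ≤ μ₂^2 * (a^2 - s^2) := by nlinarith
          have e2 : (μ₁+μ₂)*(L-μ₂)*((μ₁^2-μ₂^2)*s^2) ≤ (μ₁+μ₂)*(L-μ₂)*(μ₂^2*(a^2-s^2)) :=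
            mul_le_mul_of_nonneg_left e1 (mul_nonneg (by linarith) (by linarith))
          have e3 : (μ₁+μ₂)*(μ₁-μ₂)*((μ₁^2-μ₂^2)*s^2) ≤ (μ₁+μ₂)*(L-μ₂)*((μ₁^2-μ₂^2)*s^2) := by
            apply mul_le_mul_of_nonneg_right _ (mul_nonneg (by nlinarith) (sq_nonneg s))
            nlinarith
          have e4 : μ₂^2 * ((μ₁-μ₂)^2 * s^2) ≤ (μ₁+μ₂)*(μ₁-μ₂)*((μ₁^2-μ₂^2)*s^2) := by
            have h5 : μ₂^2 ≤ (μ₁+μ₂)^2 := by nlinarith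
            calc μ₂^2 * ((μ₁-μ₂)^2 * s^2) ≤ (μ₁+μ₂)^2 * ((μ₁-μ₂)^2 * s^2) :=
                  mul_le_mul_of_nonneg_right h5 (by positivity)
            _ = (μ₁+μ₂)*(μ₁-μ₂)*((μ₁^2-μ₂^2)*s^2) := by ring
          have e5 : μ₂^2 * ((μ₁-μ₂)^2 * s^2) ≤ μ₂^2 * ((μ₁ + μ₂) * (L - μ₂) * (a ^ 2 - s ^ 2)) := by
            calc μ₂^2 * ((μ₁-μ₂)^2 * s^2) ≤ (μ₁+μ₂)*(L-μ₂)*(μ₂^2*(a^2-s^2)) := by linarith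
            _ = μ₂^2 * ((μ₁ + μ₂) * (L - μ₂) * (a ^ 2 - s ^ 2)) := by ring
          have := le_of_mul_le_mul_left (by linarith : μ₂^2 * ((μ₁-μ₂)^2 * s^2) ≤ μ₂^2 * ((μ₁ + μ₂) * (L - μ₂) * (a ^ 2 - s ^ 2))) (by positivity : (0:ℝ) < μ₂^2)
          nlinarith [sq_nonneg T]
      · have hTge : μ₁ * s - μ₂ * a ≤ T := by nlinarith
        have h0 : 0 ≤ μ₁ * s - μ₂ * a := by linarith
        have hTsq : (μ₁ * s - μ₂ * a) ^ 2 ≤ T ^ 2 := by nlinarith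
        have hf1 : (0:ℝ) ≤ μ₁ * (a - s) := mul_nonneg hμ₁ (by linarith)
        have hf2 : (0:ℝ) ≤ μ₁*a + μ₁*s - 2*μ₂*s := by nlinarith
        have hprod := mul_nonneg hf1 hf2
        nlinarith [hTsq, hprod,
          mul_nonneg (mul_nonneg (by linarith : (0:ℝ) ≤ μ₁ + μ₂) (by linarith : (0:ℝ) ≤ L - μ₁)) (by linarith : (0:ℝ) ≤ a^2 - s^2)]

variable {F : Type*} [NormedAddCommGroup F] [InnerProductSpace ℝ F]

local notation "⟪" x ", " y "⟫" => @inner ℝ _ _ x y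

lemma aux_quad (c : ℝ) (z : F) :
    HasFDerivAt (fun w : F => c / 2 * ‖w‖ ^ 2) (c • (innerSL ℝ) z) z := by
  have h1 := ((hasFDerivAt_id z).inner ℝ (hasFDerivAt_id z)).const_mul (c / 2)
  simp only [id_eq] at h1
  have hfun : (fun w : F => c / 2 * ⟪w, w⟫) = fun w : F => c / 2 * ‖w‖ ^ 2 := by
    funext w; rw [real_inner_self_eq_norm_sq]
  rw [hfun] at h1
  refine HasFDerivAt.congr_fderiv h1 ?_
  ext v
  simp [fderivInnerCLM, real_inner_comm]
  ring

lemma diff_quad (c : ℝ) : Differentiable ℝ (fun w : F => c / 2 * ‖w‖ ^ 2) :=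
  fun z => (aux_quad c z).differentiableAt

lemma convex_first_order {G : Type*} [NormedAddCommGroup G] [NormedSpace ℝ G]
    {g : G → ℝ} (hg : Differentiable ℝ g) (hc : ConvexOn ℝ univ g) (x y : G) :
    g x + fderiv ℝ g x (y - x) ≤ g y := by
  have hline : HasDerivAt (fun t : ℝ => x + t • (y - x)) (y - x) 0 := by
    simpa using ((hasDerivAt_id (0 : ℝ)).smul_const (y - x)).const_add x
  have hφ : HasDerivAt (fun t : ℝ => g (x + t • (y - x))) (fderiv ℝ g x (y - x)) 0 := by
    have h := (hg (x + (0 : ℝ) • (y - x))).hasFDerivAt.comp_hasDerivAt 0 hline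
    rw [zero_smul, add_zero] at h
    exact h
  have hkey : ∀ t ∈ Ioc (0 : ℝ) 1,
      slope (fun t : ℝ => g (x + t • (y - x))) 0 t ≤ g y - g x := by
    intro t ht
    have hcv := hc.2 (mem_univ x) (mem_univ y)
      (by linarith [ht.2] : (0 : ℝ) ≤ 1 - t) (le_of_lt ht.1) (by ring)
    have hpt : (1 - t) • x + t • y = x + t • (y - x) := by
      rw [sub_smul, one_smul, smul_sub]; abel
    rw [hpt] at hcv
    have : g (x + t • (y - x)) - g (x + (0 : ℝ) • (y - x)) ≤ t * (g y - g x) := by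
      simp only [zero_smul, add_zero]
      have : g (x + t • (y - x)) ≤ (1 - t) * g x + t * g y := by
        simpa [smul_eq_mul] using hcv
      nlinarith
    rw [slope_def_field, sub_zero, div_le_iff₀ ht.1]
    simp only [zero_smul, add_zero] at this ⊢; linarith
  have hmono : (𝓝[>] (0:ℝ)) ≤ 𝓝[≠] (0:ℝ) :=
    nhdsWithin_mono _ (fun z hz => ne_of_gt hz)
  have htend := (hasDerivAt_iff_tendsto_slope.1 hφ).mono_left hmono
  have hev : ∀ᶠ t in 𝓝[>] (0:ℝ),
      slope (fun t : ℝ => g (x + t • (y - x))) 0 t ≤ g y - g x :=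
    Filter.eventually_of_mem (Ioc_mem_nhdsGT_of_mem ⟨le_refl 0, zero_lt_one⟩) hkey
  have := le_of_tendsto htend hev
  linarith

lemma strong_first_order {f : F → ℝ} {c : ℝ} (hf : Differentiable ℝ f)
    (hc : ConvexOn ℝ univ (fun z => f z - c / 2 * ‖z‖ ^ 2)) (x y : F) :
    f x + fderiv ℝ f x (y - x) + c / 2 * ‖y - x‖ ^ 2 ≤ f y := by
  have hg : Differentiable ℝ (fun z : F => f z - c / 2 * ‖z‖ ^ 2) := hf.sub (diff_quad c)
  have h1 := convex_first_order hg hc x y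
  have hfd : fderiv ℝ (fun z : F => f z - c / 2 * ‖z‖ ^ 2) x
      = fderiv ℝ f x - c • (innerSL ℝ) x := ((hf x).hasFDerivAt.sub (aux_quad c x)).fderiv
  rw [hfd] at h1
  simp only [ContinuousLinearMap.sub_apply, ContinuousLinearMap.smul_apply, innerSL_apply_apply,
    smul_eq_mul] at h1
  have e1 : ⟪x, y - x⟫ = ⟪x, y⟫ - ‖x‖ ^ 2 := by
    rw [inner_sub_right, real_inner_self_eq_norm_sq]
  have e2 : ‖y - x‖ ^ 2 = ‖y‖ ^ 2 - 2 * ⟪x, y⟫ + ‖x‖ ^ 2 := by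
    rw [norm_sub_sq_real, real_inner_comm]
  rw [e1] at h1
  rw [e2]
  linarith

lemma descent_lemma {f : F → ℝ} {L : ℝ} (hf : Differentiable ℝ f)
    (hL : ConvexOn ℝ univ (fun z => L / 2 * ‖z‖ ^ 2 - f z)) (x y : F) :
    f y ≤ f x + fderiv ℝ f x (y - x) + L / 2 * ‖y - x‖ ^ 2 := by
  have hg : Differentiable ℝ (fun z : F => L / 2 * ‖z‖ ^ 2 - f z) := (diff_quad L).sub hf
  have h1 := convex_first_order hg hL x y
  have hfd : fderiv ℝ (fun z : F => L / 2 * ‖z‖ ^ 2 - f z) x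
      = L • (innerSL ℝ) x - fderiv ℝ f x := ((aux_quad L x).sub (hf x).hasFDerivAt).fderiv
  rw [hfd] at h1
  simp only [ContinuousLinearMap.sub_apply, ContinuousLinearMap.smul_apply, innerSL_apply_apply,
    smul_eq_mul] at h1
  have e1 : ⟪x, y - x⟫ = ⟪x, y⟫ - ‖x‖ ^ 2 := by
    rw [inner_sub_right, real_inner_self_eq_norm_sq]
  have e2 : ‖y - x‖ ^ 2 = ‖y‖ ^ 2 - 2 * ⟪x, y⟫ + ‖x‖ ^ 2 := by
    rw [norm_sub_sq_real, real_inner_comm]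
  rw [e1] at h1
  rw [e2]
  linarith

lemma clm_convexOn (c : F →L[ℝ] ℝ) : ConvexOn ℝ univ (fun z : F => c z) := by
  refine ⟨convex_univ, fun a _ b _ p q hp hq hpq => ?_⟩
  simp [map_add, map_smul, smul_eq_mul]

lemma interp_lemma [CompleteSpace F] {f : F → ℝ} {μ L : ℝ} (hf : Differentiable ℝ f)
    (hμ : ConvexOn ℝ univ (fun z => f z - μ / 2 * ‖z‖ ^ 2))
    (hL : ConvexOn ℝ univ (fun z => L / 2 * ‖z‖ ^ 2 - f z)) (hμL : μ < L) (x y : F) :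
    f x + fderiv ℝ f x (y - x) + μ / 2 * ‖y - x‖ ^ 2
      + ‖fderiv ℝ f y - fderiv ℝ f x - μ • (innerSL ℝ) (y - x)‖ ^ 2 / (2 * (L - μ)) ≤ f y := by
  set lam := L - μ with hlam
  have hlam0 : 0 < lam := by simp [hlam]; linarith
  -- g := f - μ/2 ‖·‖²
  set g : F → ℝ := fun z => f z - μ / 2 * ‖z‖ ^ 2 with hgdef
  have hgdiff : Differentiable ℝ g := hf.sub (diff_quad μ)
  have hgfd : ∀ z, fderiv ℝ g z = fderiv ℝ f z - μ • (innerSL ℝ) z :=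
    fun z => ((hf z).hasFDerivAt.sub (aux_quad μ z)).fderiv
  have hgsm : ConvexOn ℝ univ (fun z => lam / 2 * ‖z‖ ^ 2 - g z) := by
    have : (fun z : F => lam / 2 * ‖z‖ ^ 2 - g z) = fun z => L / 2 * ‖z‖ ^ 2 - f z := by
      funext z; simp only [hgdef, hlam]; ring
    rw [this]; exact hL
  have hgc : ConvexOn ℝ univ g := hμ
  -- h := g - (fderiv g x)
  set c : F →L[ℝ] ℝ := fderiv ℝ g x with hcdef
  set h : F → ℝ := fun z => g z - c z with hhdef
  have hhdiff : Differentiable ℝ h := hgdiff.sub c.differentiable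
  have hhfd : ∀ z, fderiv ℝ h z = fderiv ℝ g z - c :=
    fun z => ((hgdiff z).hasFDerivAt.sub c.hasFDerivAt).fderiv
  have hneg : ConvexOn ℝ univ (fun z : F => -(c z)) := by
    have := clm_convexOn (-c)
    simpa using this
  have hhc : ConvexOn ℝ univ h := by
    have h0 := hgc.add hneg
    have he : (g + fun z : F => -(c z)) = h := by
      funext z; simp [hhdef, Pi.add_apply, sub_eq_add_neg]
    rwa [he] at h0
  have hhsm : ConvexOn ℝ univ (fun z => lam / 2 * ‖z‖ ^ 2 - h z) := by
    have h0 := hgsm.add (clm_convexOn c)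
    have he : ((fun z : F => lam / 2 * ‖z‖ ^ 2 - g z) + fun z : F => c z)
        = fun z => lam / 2 * ‖z‖ ^ 2 - h z := by
      funext z; simp only [Pi.add_apply, hhdef]; ring
    rwa [he] at h0
  -- h is minimized at x
  have hmin : ∀ z, h x ≤ h z := by
    intro z
    have := convex_first_order hhdiff hhc x z
    rw [hhfd x, ← hcdef] at this
    simpa using this
  -- descent step at y
  set T : F →L[ℝ] ℝ := fderiv ℝ g y - c with hTdef
  set v : F := -(lam⁻¹) • (InnerProductSpace.toDual ℝ F).symm T with hvdef
  have hTv : T v = -(lam⁻¹) * ‖T‖ ^ 2 := by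
    rw [hvdef, map_smul]
    have h1 : T ((InnerProductSpace.toDual ℝ F).symm T)
        = ⟪(InnerProductSpace.toDual ℝ F).symm T, (InnerProductSpace.toDual ℝ F).symm T⟫ :=
      (InnerProductSpace.toDual_symm_apply).symm
    rw [smul_eq_mul, h1, real_inner_self_eq_norm_sq, LinearIsometryEquiv.norm_map]
  have hvnorm : ‖v‖ ^ 2 = lam⁻¹ ^ 2 * ‖T‖ ^ 2 := by
    rw [hvdef, norm_smul, LinearIsometryEquiv.norm_map, mul_pow]
    congr 1
    rw [norm_neg, norm_inv, Real.norm_eq_abs, abs_of_pos hlam0]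
  have hdes := descent_lemma hhdiff hhsm y (y + v)
  rw [add_sub_cancel_left, hhfd y, ← hTdef] at hdes
  have hmin' := hmin (y + v)
  -- combine:  h x ≤ h y - ‖T‖²/(2 lam)
  have hcomb : h x ≤ h y - ‖T‖ ^ 2 / (2 * lam) := by
    have h2 : h x ≤ h y + T v + lam / 2 * ‖v‖ ^ 2 := le_trans hmin' hdes
    rw [hTv, hvnorm] at h2
    have hval : -(lam⁻¹) * ‖T‖ ^ 2 + lam / 2 * (lam⁻¹ ^ 2 * ‖T‖ ^ 2) = -(‖T‖ ^ 2 / (2 * lam)) := by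
      field_simp
      ring
    linarith [h2, hval.le, hval.ge]
  -- unfold h, g
  have hTnorm : T = fderiv ℝ f y - fderiv ℝ f x - μ • (innerSL ℝ) (y - x) := by
    rw [hTdef, hcdef, hgfd, hgfd, map_sub, smul_sub]
    abel
  have hcy : c (y - x) = fderiv ℝ f x (y - x) - μ * ⟪x, y - x⟫ := by
    rw [hcdef, hgfd]
    simp [ContinuousLinearMap.sub_apply]
  have e1 : ⟪x, y - x⟫ = ⟪x, y⟫ - ‖x‖ ^ 2 := by
    rw [inner_sub_right, real_inner_self_eq_norm_sq]
  have e2 : ‖y - x‖ ^ 2 = ‖y‖ ^ 2 - 2 * ⟪x, y⟫ + ‖x‖ ^ 2 := by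
    rw [norm_sub_sq_real, real_inner_comm]
  have hcsub : c y - c x = c (y - x) := (map_sub c y x).symm
  simp only [hhdef, hgdef] at hcomb
  rw [← hTnorm]
  have : c (y - x) = c y - c x := (map_sub c y x)
  rw [hcy] at this
  rw [e1] at this
  rw [e2]
  linarith [hcomb]

theorem stmt_14 {d : ℕ} (f₁ f₂ : EuclideanSpace ℝ (Fin d) → ℝ) (μ₁ L₁ μ₂ L₂ : ℝ)
    (hf₁ : Differentiable ℝ f₁) (hf₂ : Differentiable ℝ f₂)
    (hL₂ : L₂ > μ₁) (hμ₁₂ : μ₁ ≥ μ₂) (hμ₂ : μ₂ ≥ 0) (hsum : μ₁ + μ₂ > 0) (h₁ : μ₁ < L₁)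
    (hcL₁ : ConvexOn ℝ univ (fun x => L₁ / 2 * ‖x‖ ^ 2 - f₁ x))
    (hcμ₁ : ConvexOn ℝ univ (fun x => f₁ x - μ₁ / 2 * ‖x‖ ^ 2))
    (hcL₂ : ConvexOn ℝ univ (fun x => L₂ / 2 * ‖x‖ ^ 2 - f₂ x))
    (hcμ₂ : ConvexOn ℝ univ (fun x => f₂ x - μ₂ / 2 * ‖x‖ ^ 2))
    (N : ℕ) (hN : N ≥ 1) (x : ℕ → EuclideanSpace ℝ (Fin d))
    (hDCA : ∀ k ≤ N, gradient f₁ (x (k + 1)) = gradient f₂ (x k)) :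
    (1 / 2) * (⨅ k : Fin (N + 1), ‖x k.val - x (k.val + 1)‖ ^ 2) ≤
      ((f₁ (x 0) - f₂ (x 0)) - (f₁ (x (N + 1)) - f₂ (x (N + 1)))) /
        ((μ₁ + μ₂) + (μ₁ + μ₂ + (μ₁ - μ₂) ^ 2 / (L₂ - μ₂)) * N) := by
  have hlam : (0:ℝ) < L₂ - μ₂ := by linarith
  set m : ℝ := ⨅ k : Fin (N + 1), ‖x k.val - x (k.val + 1)‖ ^ 2 with hmdef
  have hm0 : 0 ≤ m := le_ciInf (fun k => sq_nonneg _)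
  have hmle : ∀ k ≤ N, m ≤ ‖x k - x (k + 1)‖ ^ 2 := by
    intro k hk
    have := ciInf_le (Set.Finite.bddBelow (Set.finite_range
      (fun k : Fin (N+1) => ‖x k.val - x (k.val + 1)‖ ^ 2))) (⟨k, by omega⟩ : Fin (N + 1))
    simpa using this
  set s : ℝ := Real.sqrt m with hsdef
  have hs0 : 0 ≤ s := Real.sqrt_nonneg m
  have hs2 : s ^ 2 = m := Real.sq_sqrt hm0
  have hsA : ∀ k ≤ N, s ≤ ‖x k - x (k + 1)‖ := by
    intro k hk
    have h := Real.sqrt_le_sqrt (hmle k hk)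
    rwa [Real.sqrt_sq (norm_nonneg _)] at h
  -- DCA in fderiv form
  have hD : ∀ k ≤ N, fderiv ℝ f₁ (x (k + 1)) = fderiv ℝ f₂ (x k) := by
    intro k hk
    have h := congrArg (InnerProductSpace.toDual ℝ (EuclideanSpace ℝ (Fin d))) (hDCA k hk)
    simpa [gradient, LinearIsometryEquiv.apply_symm_apply] using h
  -- step decrease
  have hstep : ∀ k ≤ N,
      (μ₁ + μ₂) / 2 * ‖x k - x (k + 1)‖ ^ 2
        + ‖fderiv ℝ f₂ (x (k + 1)) - fderiv ℝ f₂ (x k)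
            - μ₂ • (innerSL ℝ) (x (k + 1) - x k)‖ ^ 2 / (2 * (L₂ - μ₂))
      ≤ (f₁ (x k) - f₂ (x k)) - (f₁ (x (k + 1)) - f₂ (x (k + 1))) := by
    intro k hk
    have h1 := strong_first_order hf₁ hcμ₁ (x (k + 1)) (x k)
    have h2 := interp_lemma hf₂ hcμ₂ hcL₂ (by linarith : μ₂ < L₂) (x k) (x (k + 1))
    rw [hD k hk] at h1
    have e : fderiv ℝ f₂ (x k) (x k - x (k + 1))
        = - fderiv ℝ f₂ (x k) (x (k + 1) - x k) := by
      rw [← map_neg]; congr 1; abel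
    rw [e] at h1
    have en : ‖x (k + 1) - x k‖ = ‖x k - x (k + 1)‖ := norm_sub_rev _ _
    rw [en] at h2
    linarith
  -- pair inequality
  have hpair : ∀ k, k + 1 ≤ N →
      μ₁ * ‖x (k + 1) - x (k + 2)‖ ^ 2
        - μ₂ * (‖x k - x (k + 1)‖ * ‖x (k + 1) - x (k + 2)‖)
      ≤ ‖fderiv ℝ f₂ (x (k + 1)) - fderiv ℝ f₂ (x k)
            - μ₂ • (innerSL ℝ) (x (k + 1) - x k)‖ * ‖x (k + 1) - x (k + 2)‖ := by
    intro k hk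
    set w := x (k + 2) - x (k + 1) with hwdef
    set T := fderiv ℝ f₂ (x (k + 1)) - fderiv ℝ f₂ (x k)
            - μ₂ • (innerSL ℝ) (x (k + 1) - x k) with hTdef
    have hm1 := strong_first_order hf₁ hcμ₁ (x (k + 1)) (x (k + 2))
    have hm2 := strong_first_order hf₁ hcμ₁ (x (k + 2)) (x (k + 1))
    have e2 : fderiv ℝ f₁ (x (k + 2)) (x (k + 1) - x (k + 2))
        = - fderiv ℝ f₁ (x (k + 2)) w := by
      rw [← map_neg]; congr 1; rw [hwdef]; abel
    rw [e2] at hm2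
    have en2 : ‖x (k + 1) - x (k + 2)‖ = ‖w‖ := by rw [hwdef, norm_sub_rev]
    rw [en2] at hm2
    have hmono : μ₁ * ‖w‖ ^ 2 ≤ fderiv ℝ f₁ (x (k + 2)) w - fderiv ℝ f₁ (x (k + 1)) w := by
      linarith
    rw [hD k (by omega), hD (k + 1) hk] at hmono
    have hTw : T w = fderiv ℝ f₂ (x (k + 1)) w - fderiv ℝ f₂ (x k) w
        - μ₂ * ⟪x (k + 1) - x k, w⟫ := by
      rw [hTdef]
      simp only [ContinuousLinearMap.sub_apply, ContinuousLinearMap.smul_apply, innerSL_apply_apply,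
        smul_eq_mul]
    have hcs : ⟪x (k + 1) - x k, w⟫ ≤ ‖x (k + 1) - x k‖ * ‖w‖ := real_inner_le_norm _ _
    have hop : T w ≤ ‖T‖ * ‖w‖ := by
      calc T w ≤ ‖T w‖ := le_abs_self _
      _ ≤ ‖T‖ * ‖w‖ := T.le_opNorm w
    have hcs' : μ₂ * ⟪x (k + 1) - x k, w⟫ ≤ μ₂ * (‖x (k + 1) - x k‖ * ‖w‖) :=
      mul_le_mul_of_nonneg_left hcs hμ₂
    have en1 : ‖x (k + 1) - x k‖ = ‖x k - x (k + 1)‖ := norm_sub_rev _ _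
    rw [en2, ← en1]
    have := hTw
    linarith [hmono, hop, hcs', hTw.ge, hTw.le]
  -- per-step lower bound with the extra term, for k < N
  have hperk : ∀ k, k + 1 ≤ N →
      (μ₁ + μ₂) / 2 * m + (μ₁ - μ₂) ^ 2 * m / (2 * (L₂ - μ₂))
      ≤ (f₁ (x k) - f₂ (x k)) - (f₁ (x (k + 1)) - f₂ (x (k + 1))) := by
    intro k hk
    have hk' : k ≤ N := by omega
    have hkey := key μ₁ μ₂ L₂ s (‖x k - x (k + 1)‖) (‖x (k + 1) - x (k + 2)‖)
      (‖fderiv ℝ f₂ (x (k + 1)) - fderiv ℝ f₂ (x k)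
            - μ₂ • (innerSL ℝ) (x (k + 1) - x k)‖)
      hμ₂ hμ₁₂ hL₂ hs0 (hsA k hk') (hsA (k + 1) hk) (norm_nonneg _) (hpair k hk)
    rw [hs2] at hkey
    have hstep' := hstep k hk'
    have h2lam : (0:ℝ) < 2 * (L₂ - μ₂) := by linarith
    have hAm : m ≤ ‖x k - x (k + 1)‖ ^ 2 := hmle k hk'
    have hdiv : ((μ₁ - μ₂) ^ 2 * m) / (2 * (L₂ - μ₂))
        ≤ ((μ₁ + μ₂) * (L₂ - μ₂) * (‖x k - x (k + 1)‖ ^ 2 - m)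
            + ‖fderiv ℝ f₂ (x (k + 1)) - fderiv ℝ f₂ (x k)
            - μ₂ • (innerSL ℝ) (x (k + 1) - x k)‖ ^ 2) / (2 * (L₂ - μ₂)) :=
      by gcongr
    have hexp : ((μ₁ + μ₂) * (L₂ - μ₂) * (‖x k - x (k + 1)‖ ^ 2 - m)
            + ‖fderiv ℝ f₂ (x (k + 1)) - fderiv ℝ f₂ (x k)
            - μ₂ • (innerSL ℝ) (x (k + 1) - x k)‖ ^ 2) / (2 * (L₂ - μ₂))
        = (μ₁ + μ₂) / 2 * ‖x k - x (k + 1)‖ ^ 2 - (μ₁ + μ₂) / 2 * m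
            + ‖fderiv ℝ f₂ (x (k + 1)) - fderiv ℝ f₂ (x k)
            - μ₂ • (innerSL ℝ) (x (k + 1) - x k)‖ ^ 2 / (2 * (L₂ - μ₂)) := by
      field_simp
    rw [hexp] at hdiv
    linarith
  -- last step
  have hlast : (μ₁ + μ₂) / 2 * m
      ≤ (f₁ (x N) - f₂ (x N)) - (f₁ (x (N + 1)) - f₂ (x (N + 1))) := by
    have hstepN := hstep N le_rfl
    have h1 : (μ₁ + μ₂) / 2 * m ≤ (μ₁ + μ₂) / 2 * ‖x N - x (N + 1)‖ ^ 2 :=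
      mul_le_mul_of_nonneg_left (hmle N le_rfl) (by linarith)
    have h2 : (0:ℝ) ≤ ‖fderiv ℝ f₂ (x (N + 1)) - fderiv ℝ f₂ (x N)
            - μ₂ • (innerSL ℝ) (x (N + 1) - x N)‖ ^ 2 / (2 * (L₂ - μ₂)) := by positivity
    linarith
  -- summation
  have htel : ∑ k ∈ Finset.range (N + 1),
      ((f₁ (x k) - f₂ (x k)) - (f₁ (x (k + 1)) - f₂ (x (k + 1))))
      = (f₁ (x 0) - f₂ (x 0)) - (f₁ (x (N + 1)) - f₂ (x (N + 1))) :=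
    Finset.sum_range_sub' (fun k => f₁ (x k) - f₂ (x k)) (N + 1)
  have hsum1 : (N:ℝ) * ((μ₁ + μ₂) / 2 * m + (μ₁ - μ₂) ^ 2 * m / (2 * (L₂ - μ₂)))
      ≤ ∑ k ∈ Finset.range N,
        ((f₁ (x k) - f₂ (x k)) - (f₁ (x (k + 1)) - f₂ (x (k + 1)))) := by
    have := Finset.card_nsmul_le_sum (Finset.range N)
      (fun k => (f₁ (x k) - f₂ (x k)) - (f₁ (x (k + 1)) - f₂ (x (k + 1))))
      ((μ₁ + μ₂) / 2 * m + (μ₁ - μ₂) ^ 2 * m / (2 * (L₂ - μ₂)))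
      (fun k hk => hperk k (by have := Finset.mem_range.1 hk; omega))
    simpa only [Finset.card_range, nsmul_eq_mul] using this
  have htotal : (N:ℝ) * ((μ₁ + μ₂) / 2 * m + (μ₁ - μ₂) ^ 2 * m / (2 * (L₂ - μ₂)))
      + (μ₁ + μ₂) / 2 * m
      ≤ (f₁ (x 0) - f₂ (x 0)) - (f₁ (x (N + 1)) - f₂ (x (N + 1))) := by
    rw [← htel, Finset.sum_range_succ]
    linarith
  -- finish
  have hD0 : (0:ℝ) < (μ₁ + μ₂) + (μ₁ + μ₂ + (μ₁ - μ₂) ^ 2 / (L₂ - μ₂)) * N := by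
    have h1 : (0:ℝ) ≤ (μ₁ + μ₂ + (μ₁ - μ₂) ^ 2 / (L₂ - μ₂)) * N :=
      mul_nonneg (by positivity) (Nat.cast_nonneg N)
    linarith
  rw [le_div_iff₀ hD0]
  have hDexp : 1 / 2 * m * ((μ₁ + μ₂) + (μ₁ + μ₂ + (μ₁ - μ₂) ^ 2 / (L₂ - μ₂)) * N)
      = (N:ℝ) * ((μ₁ + μ₂) / 2 * m + (μ₁ - μ₂) ^ 2 * m / (2 * (L₂ - μ₂)))
        + (μ₁ + μ₂) / 2 * m := by
    field_simp
    ring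
  rw [hDexp]
  exact htotal
end

section
/- Let f₁, f₂ : ℝ^d → ℝ be differentiable with curvatures in [μ₁, L₁] and [μ₂, L₂] respectively, where 0 < L₂ ≤ μ₁ < L₁, μ₁ + μ₂ > 0 and μ₂ ∈ [−L₂μ₁/(L₂+μ₁), L₂). Let x⁰, …, x^{N+1} be generated by DCA (∇f₁(x^{k+1}) = ∇f₂(x^k)), N ≥ 1. Then (1/2)‖x^N − x^{N+1}‖² ≤ (F(x⁰) − F(x^{N+1})) / (μ₁ + μ₂ + μ₁·E_N(L₂/μ₁)), where E_N(z) = Σ_{j=1}^{2N} z^{−j} and F = f₁ − f₂. -/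
open Set

open Filter Topology InnerProductSpace

set_option linter.unusedSectionVars false

section Helpers

variable {F : Type*} [NormedAddCommGroup F] [InnerProductSpace ℝ F] [CompleteSpace F]

lemma grad_lower_s15 {g : F → ℝ} {c : ℝ} {G a : F} (hG : HasGradientAt g G a)
    (hc : ConvexOn ℝ Set.univ (fun u => g u - c / 2 * ‖u‖ ^ 2)) (b : F) :
    g a + ⟪G, b - a⟫_ℝ + c / 2 * ‖b - a‖ ^ 2 ≤ g b := by
  set v := b - a with hv
  set ip := ⟪a, v⟫_ℝ with hip
  set nv := ‖v‖ ^ 2 with hnv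
  set na := ‖a‖ ^ 2 with hna
  set φ : ℝ → ℝ := fun t => g (a + t • v) - c / 2 * (na + 2 * t * ip + t ^ 2 * nv) with hφ
  have hGf : HasFDerivAt g (toDual ℝ F G) a := hG.hasFDerivAt
  have hline : HasDerivAt (fun t : ℝ => a + t • v) v 0 := by
    simpa using ((hasDerivAt_id (0 : ℝ)).smul_const v).const_add a
  have hGf' : HasFDerivAt g (toDual ℝ F G) ((fun t : ℝ => a + t • v) 0) := by simpa using hGf
  have hcomp : HasDerivAt (fun t : ℝ => g (a + t • v)) (⟪G, v⟫_ℝ) 0 := by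
    simpa [toDual_apply_apply, Function.comp_def] using hGf'.comp_hasDerivAt 0 hline
  have hpoly : HasDerivAt (fun t : ℝ => c / 2 * (na + 2 * t * ip + t ^ 2 * nv)) (c * ip) 0 := by
    have ha : HasDerivAt (fun t : ℝ => 2 * t * ip) (2 * ip) 0 := by
      simpa using (((hasDerivAt_id (0 : ℝ)).const_mul 2).mul_const ip)
    have hb : HasDerivAt (fun t : ℝ => t ^ 2 * nv) 0 0 := by
      simpa using (hasDerivAt_pow 2 (0 : ℝ)).mul_const nv
    have h1 : HasDerivAt (fun t : ℝ => na + 2 * t * ip + t ^ 2 * nv) (2 * ip) 0 := by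
      simpa [Pi.add_def] using (ha.const_add na).add hb
    have h2 : HasDerivAt (fun t : ℝ => c / 2 * (na + 2 * t * ip + t ^ 2 * nv)) (c / 2 * (2 * ip)) 0 :=
      h1.const_mul (c / 2)
    convert h2 using 1
    ring
  have hφd : HasDerivAt φ (⟪G, v⟫_ℝ - c * ip) 0 := hcomp.sub hpoly
  have hφeq : ∀ t : ℝ, φ t = g (a + t • v) - c / 2 * ‖a + t • v‖ ^ 2 := by
    intro t
    simp only [hφ]
    congr 2
    rw [norm_add_sq_real, real_inner_smul_right, norm_smul, Real.norm_eq_abs, mul_pow, sq_abs]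
    ring
  have hb' : a + v = b := by rw [hv]; abel
  have key0 : ∀ t ∈ Set.Ioc (0 : ℝ) 1, slope φ 0 t ≤ φ 1 - φ 0 := by
    intro t ht
    have hrec := hc.2 (Set.mem_univ a) (Set.mem_univ b)
      (by linarith [ht.2] : (0 : ℝ) ≤ 1 - t) ht.1.le (by ring)
    have hcomb : (1 - t) • a + t • b = a + t • v := by
      rw [hv, sub_smul, one_smul, smul_sub]; abel
    simp only [smul_eq_mul, hcomb] at hrec
    have hφt : φ t ≤ (1 - t) * φ 0 + t * φ 1 := by
      rw [hφeq t, hφeq 0, hφeq 1]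
      simp only [zero_smul, add_zero, one_smul, hb']
      exact hrec
    rw [slope_def_field, sub_zero, div_le_iff₀ ht.1]
    nlinarith [hφt]
  have hslope : Tendsto (slope φ 0) (𝓝[>] (0 : ℝ)) (𝓝 (⟪G, v⟫_ℝ - c * ip)) :=
    (hasDerivAt_iff_tendsto_slope.mp hφd).mono_left
      (nhdsWithin_mono _ (fun t ht => ne_of_gt ht))
  have hlim : ⟪G, v⟫_ℝ - c * ip ≤ φ 1 - φ 0 :=
    le_of_tendsto hslope (by
      filter_upwards [Ioc_mem_nhdsGT (zero_lt_one : (0:ℝ) < 1)] with t ht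
      exact key0 t ht)
  have h0 : φ 0 = g a - c / 2 * na := by simp [hφ]
  have h1 : φ 1 = g b - c / 2 * (na + 2 * ip + nv) := by
    have h2 := hφeq 1
    rw [one_smul, hb'] at h2
    rw [h2]
    have h3 : ‖b‖ ^ 2 = na + 2 * ip + nv := by
      rw [hna, hip, hnv, ← hb', norm_add_sq_real]
    rw [h3]
  rw [h0, h1] at hlim
  linarith

lemma grad_upper_s15 {g : F → ℝ} {c : ℝ} {G a : F} (hG : HasGradientAt g G a)
    (hc : ConvexOn ℝ Set.univ (fun u => c / 2 * ‖u‖ ^ 2 - g u)) (b : F) :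
    g b ≤ g a + ⟪G, b - a⟫_ℝ + c / 2 * ‖b - a‖ ^ 2 := by
  have hneg : HasGradientAt (fun u => -g u) (-G) a := by
    rw [hasGradientAt_iff_hasFDerivAt] at hG ⊢
    simpa [map_neg, Pi.neg_def] using hG.neg
  have hc' : ConvexOn ℝ Set.univ (fun u => (fun w => -g w) u - (-c) / 2 * ‖u‖ ^ 2) := by
    convert hc using 2 with u
    ring
  have h := grad_lower_s15 hneg hc' b
  simp only [inner_neg_left] at h
  linarith

lemma grad_coco {g : F → ℝ} {c C : ℝ} (hcC : c < C) {Gx Gy px py : F}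
    (hx : HasGradientAt g Gx px) (hy : HasGradientAt g Gy py)
    (hlow : ConvexOn ℝ Set.univ (fun u => g u - c / 2 * ‖u‖ ^ 2))
    (hup : ConvexOn ℝ Set.univ (fun u => C / 2 * ‖u‖ ^ 2 - g u)) :
    g px + ⟪Gx, py - px⟫_ℝ + c / 2 * ‖py - px‖ ^ 2
      + 1 / (2 * (C - c)) * ‖Gy - Gx - c • (py - px)‖ ^ 2 ≤ g py := by
  have hL : 0 < C - c := sub_pos.mpr hcC
  have hne : C - c ≠ 0 := ne_of_gt hL
  set u : F := Gy - Gx - c • (py - px) with hu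
  set w : F := py - (C - c)⁻¹ • u with hw
  have h1 := grad_lower_s15 hx hlow w
  have h2 := grad_upper_s15 hy hup w
  have hwx : w - px = (py - px) - (C - c)⁻¹ • u := by rw [hw]; abel
  have hwy : w - py = -((C - c)⁻¹ • u) := by rw [hw]; abel
  rw [hwx] at h1
  rw [hwy] at h2
  have e1 : ⟪Gx, (py - px) - (C - c)⁻¹ • u⟫_ℝ
      = ⟪Gx, py - px⟫_ℝ - (C - c)⁻¹ * ⟪Gx, u⟫_ℝ := by
    rw [inner_sub_right, real_inner_smul_right]
  have e2 : ‖(py - px) - (C - c)⁻¹ • u‖ ^ 2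
      = ‖py - px‖ ^ 2 - 2 * ((C - c)⁻¹ * ⟪py - px, u⟫_ℝ) + (C - c)⁻¹ ^ 2 * ‖u‖ ^ 2 := by
    rw [norm_sub_sq_real, real_inner_smul_right, norm_smul, Real.norm_eq_abs, mul_pow, sq_abs]
  have e3 : ⟪Gy, -((C - c)⁻¹ • u)⟫_ℝ = -((C - c)⁻¹ * ⟪Gy, u⟫_ℝ) := by
    rw [inner_neg_right, real_inner_smul_right]
  have e4 : ‖-((C - c)⁻¹ • u)‖ ^ 2 = (C - c)⁻¹ ^ 2 * ‖u‖ ^ 2 := by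
    rw [norm_neg, norm_smul, Real.norm_eq_abs, mul_pow, sq_abs]
  rw [e1, e2] at h1
  rw [e3, e4] at h2
  have huu : ⟪Gy, u⟫_ℝ - ⟪Gx, u⟫_ℝ - c * ⟪py - px, u⟫_ℝ = ‖u‖ ^ 2 := by
    have h5 : ⟪Gy - Gx - c • (py - px), u⟫_ℝ = ⟪u, u⟫_ℝ := by rw [← hu]
    simp only [inner_sub_left, real_inner_smul_left] at h5
    rw [real_inner_self_eq_norm_sq] at h5
    rw [inner_sub_left]
    linarith
  have key : (C - c)⁻¹ * (⟪Gy, u⟫_ℝ - ⟪Gx, u⟫_ℝ - c * ⟪py - px, u⟫_ℝ)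
      = (C - c)⁻¹ * ‖u‖ ^ 2 := by rw [huu]
  have scal : (C - c)⁻¹ * ‖u‖ ^ 2 - (C - c) / 2 * ((C - c)⁻¹ ^ 2 * ‖u‖ ^ 2)
      = 1 / (2 * (C - c)) * ‖u‖ ^ 2 := by
    field_simp
    ring
  have step : (C - c)⁻¹ * ⟪Gy, u⟫_ℝ - (C - c)⁻¹ * ⟪Gx, u⟫_ℝ
      - c * ((C - c)⁻¹ * ⟪py - px, u⟫_ℝ) - (C - c) / 2 * ((C - c)⁻¹ ^ 2 * ‖u‖ ^ 2)
      = 1 / (2 * (C - c)) * ‖u‖ ^ 2 := by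
    linear_combination key + scal
  linarith [h1, h2, step]

set_option maxHeartbeats 2000000 in
lemma Qstep (μ₁ L₂ μ₂ S V P sv vp sp : ℝ)
    (hL₂ : 0 < L₂) (hL₂μ₁ : L₂ ≤ μ₁)
    (hlow : -L₂ * μ₁ / (L₂ + μ₁) ≤ μ₂) (hup : μ₂ < L₂)
    (hC1 : μ₁ * P ≤ vp + μ₂ * sp)
    (hC2 : V / (L₂ - μ₂) ≤ sv)
    (hH1 : 0 ≤ V + (μ₁ * (L₂ - μ₂) / (L₂ + 2 * μ₁)) ^ 2 * S
        + (μ₁ * (μ₁ + L₂) * (L₂ - μ₂) / (L₂ * (L₂ + 2 * μ₁))) ^ 2 * P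
        - 2 * (μ₁ * (L₂ - μ₂) / (L₂ + 2 * μ₁)) * sv
        - 2 * (μ₁ * (μ₁ + L₂) * (L₂ - μ₂) / (L₂ * (L₂ + 2 * μ₁))) * vp
        + 2 * (μ₁ * (L₂ - μ₂) / (L₂ + 2 * μ₁))
            * (μ₁ * (μ₁ + L₂) * (L₂ - μ₂) / (L₂ * (L₂ + 2 * μ₁))) * sp)
    (hH2 : 0 ≤ S - 2 * (μ₁ / L₂) * sp + (μ₁ / L₂) ^ 2 * P) :
    μ₁ ^ 2 * (μ₁ + L₂) / L₂ ^ 2 * P ≤ (μ₁ + μ₂) * S + V / (L₂ - μ₂) := by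
  have hμ₁ : 0 < μ₁ := lt_of_lt_of_le hL₂ hL₂μ₁
  have hLh : 0 < L₂ - μ₂ := sub_pos.mpr hup
  have hD : 0 < L₂ + 2 * μ₁ := by linarith
  have hLμ : 0 < L₂ + μ₁ := by linarith
  have hc₂nn : 0 ≤ μ₁ * L₂ + μ₂ * (L₂ + μ₁) := by
    rw [div_le_iff₀ hLμ] at hlow
    nlinarith [hlow]
  have hl1 : (0:ℝ) ≤ 2 * μ₁ * (μ₁ + L₂) / L₂ ^ 2 := by positivity
  have hl2 : (0:ℝ) ≤ 2 * μ₁ / L₂ := by positivity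
  have hc₁ : (0:ℝ) ≤ (L₂ + 2 * μ₁) / (L₂ * (L₂ - μ₂)) := by positivity
  have hc₂ : (0:ℝ) ≤ (μ₁ + L₂) * (μ₁ * L₂ + μ₂ * (L₂ + μ₁)) / (L₂ * (L₂ + 2 * μ₁)) := by
    apply div_nonneg _ (by positivity)
    exact mul_nonneg (by linarith) hc₂nn
  have identity : (μ₁ + μ₂) * S + V / (L₂ - μ₂) - μ₁ ^ 2 * (μ₁ + L₂) / L₂ ^ 2 * P
      = (2 * μ₁ * (μ₁ + L₂) / L₂ ^ 2) * ((vp + μ₂ * sp) - μ₁ * P)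
      + (2 * μ₁ / L₂) * (sv - V / (L₂ - μ₂))
      + ((L₂ + 2 * μ₁) / (L₂ * (L₂ - μ₂))) * (V + (μ₁ * (L₂ - μ₂) / (L₂ + 2 * μ₁)) ^ 2 * S
        + (μ₁ * (μ₁ + L₂) * (L₂ - μ₂) / (L₂ * (L₂ + 2 * μ₁))) ^ 2 * P
        - 2 * (μ₁ * (L₂ - μ₂) / (L₂ + 2 * μ₁)) * sv
        - 2 * (μ₁ * (μ₁ + L₂) * (L₂ - μ₂) / (L₂ * (L₂ + 2 * μ₁))) * vp
        + 2 * (μ₁ * (L₂ - μ₂) / (L₂ + 2 * μ₁))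
            * (μ₁ * (μ₁ + L₂) * (L₂ - μ₂) / (L₂ * (L₂ + 2 * μ₁))) * sp)
      + ((μ₁ + L₂) * (μ₁ * L₂ + μ₂ * (L₂ + μ₁)) / (L₂ * (L₂ + 2 * μ₁)))
          * (S - 2 * (μ₁ / L₂) * sp + (μ₁ / L₂) ^ 2 * P) := by
    field_simp
    ring
  linarith [mul_nonneg hl1 (sub_nonneg.mpr hC1), mul_nonneg hl2 (sub_nonneg.mpr hC2),
    mul_nonneg hc₁ hH1, mul_nonneg hc₂ hH2, identity]

lemma shrink_sc (L₂ μ₂ nv ns sv : ℝ) (hM : 0 < L₂ + μ₂) (hLh : 0 < L₂ - μ₂)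
    (hnv : 0 ≤ nv) (hns : 0 ≤ ns)
    (hC2 : nv ^ 2 / (L₂ - μ₂) ≤ sv) (hcs : sv ≤ nv * ns) :
    nv ^ 2 + 2 * μ₂ * sv + μ₂ ^ 2 * ns ^ 2 ≤ L₂ ^ 2 * ns ^ 2 := by
  have hvle : nv ≤ (L₂ - μ₂) * ns := by
    rcases eq_or_lt_of_le hnv with h | h
    · nlinarith
    · have h6 : nv ^ 2 ≤ (L₂ - μ₂) * (nv * ns) := by
        rw [div_le_iff₀ hLh] at hC2
        nlinarith
      nlinarith
  rcases le_or_gt 0 μ₂ with h | h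
  · have hL2pos : 0 < L₂ := by linarith
    have hfac1 : 0 ≤ (L₂ - μ₂) * ns - nv := by linarith
    have hfac2 : 0 ≤ L₂ * ns + μ₂ * ns + nv := by nlinarith [mul_nonneg h hns, mul_nonneg hL2pos.le hns]
    have hprod := mul_nonneg hfac1 hfac2
    have hsv2 : 2 * μ₂ * sv ≤ 2 * μ₂ * (nv * ns) := by nlinarith
    nlinarith [hprod, hsv2]
  · have h7 : 2 * μ₂ * sv ≤ 2 * μ₂ * (nv ^ 2 / (L₂ - μ₂)) := by nlinarith
    have h8 : nv ^ 2 ≤ (L₂ - μ₂) ^ 2 * ns ^ 2 := by nlinarith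
    have h9 : 2 * μ₂ * (nv ^ 2 / (L₂ - μ₂)) = (2 * μ₂ / (L₂ - μ₂)) * nv ^ 2 := by ring
    have h10 : (1 + 2 * μ₂ / (L₂ - μ₂)) = (L₂ + μ₂) / (L₂ - μ₂) := by
      field_simp
      ring
    have h11 : 0 ≤ (L₂ + μ₂) / (L₂ - μ₂) := by positivity
    have h12 : (L₂ + μ₂) / (L₂ - μ₂) * nv ^ 2 ≤ (L₂ + μ₂) / (L₂ - μ₂) * ((L₂ - μ₂) ^ 2 * ns ^ 2) :=
      mul_le_mul_of_nonneg_left h8 h11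
    have h13 : (L₂ + μ₂) / (L₂ - μ₂) * ((L₂ - μ₂) ^ 2 * ns ^ 2) = (L₂ + μ₂) * (L₂ - μ₂) * ns ^ 2 := by
      field_simp
    nlinarith [h12]

lemma Esum (w : ℝ) (n : ℕ) :
    ∑ j ∈ Finset.Icc 1 (2 * n), w ^ j
      = ∑ j ∈ Finset.range n, (w ^ (2 * j + 1) + w ^ (2 * j + 2)) := by
  induction n with
  | zero => simp
  | succ m ih =>
    rw [show 2 * (m + 1) = (2 * m + 1) + 1 by ring, Finset.sum_Icc_succ_top (by omega),
      Finset.sum_Icc_succ_top (by omega), ih, Finset.sum_range_succ]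
    ring

lemma sq_expand2 (a b c : F) (α β : ℝ) :
    0 ≤ ‖a‖ ^ 2 + α ^ 2 * ‖b‖ ^ 2 + β ^ 2 * ‖c‖ ^ 2 - 2 * α * ⟪a, b⟫_ℝ - 2 * β * ⟪a, c⟫_ℝ
      + 2 * α * β * ⟪b, c⟫_ℝ := by
  have hexp : ‖a - α • b - β • c‖ ^ 2
      = ‖a‖ ^ 2 + α ^ 2 * ‖b‖ ^ 2 + β ^ 2 * ‖c‖ ^ 2 - 2 * α * ⟪a, b⟫_ℝ - 2 * β * ⟪a, c⟫_ℝ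
      + 2 * α * β * ⟪b, c⟫_ℝ := by
    rw [norm_sub_sq_real, norm_sub_sq_real, inner_sub_left]
    simp only [real_inner_smul_right, real_inner_smul_left, norm_smul, Real.norm_eq_abs,
      mul_pow, sq_abs]
    ring
  rw [← hexp]
  positivity

lemma sq_expand1 (b c : F) (w : ℝ) :
    0 ≤ ‖b‖ ^ 2 - 2 * w * ⟪b, c⟫_ℝ + w ^ 2 * ‖c‖ ^ 2 := by
  have hexp : ‖b - w • c‖ ^ 2 = ‖b‖ ^ 2 - 2 * w * ⟪b, c⟫_ℝ + w ^ 2 * ‖c‖ ^ 2 := by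
    rw [norm_sub_sq_real, real_inner_smul_right, norm_smul, Real.norm_eq_abs, mul_pow, sq_abs]
    ring
  rw [← hexp]
  positivity

end Helpers

noncomputable def E (N : ℕ) (z : ℝ) : ℝ := ∑ j ∈ Finset.Icc 1 (2 * N), z ^ (-(j : ℤ))

set_option maxHeartbeats 1600000 in
theorem stmt_15 {d : ℕ} (f₁ f₂ : EuclideanSpace ℝ (Fin d) → ℝ) (μ₁ L₁ μ₂ L₂ : ℝ)
    (hf₁ : Differentiable ℝ f₁) (hf₂ : Differentiable ℝ f₂)
    (hL₂pos : 0 < L₂) (hL₂μ₁ : L₂ ≤ μ₁) (h₁ : μ₁ < L₁)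
    (hsum : μ₁ + μ₂ > 0) (hμ₂ : μ₂ ∈ Set.Ico (-L₂ * μ₁ / (L₂ + μ₁)) L₂)
    (hcL₁ : ConvexOn ℝ univ (fun x => L₁ / 2 * ‖x‖ ^ 2 - f₁ x))
    (hcμ₁ : ConvexOn ℝ univ (fun x => f₁ x - μ₁ / 2 * ‖x‖ ^ 2))
    (hcL₂ : ConvexOn ℝ univ (fun x => L₂ / 2 * ‖x‖ ^ 2 - f₂ x))
    (hcμ₂ : ConvexOn ℝ univ (fun x => f₂ x - μ₂ / 2 * ‖x‖ ^ 2))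
    (N : ℕ) (hN : N ≥ 1) (x : ℕ → EuclideanSpace ℝ (Fin d))
    (hDCA : ∀ k ≤ N, gradient f₁ (x (k + 1)) = gradient f₂ (x k)) :
    (1 / 2) * ‖x N - x (N + 1)‖ ^ 2 ≤
      ((f₁ (x 0) - f₂ (x 0)) - (f₁ (x (N + 1)) - f₂ (x (N + 1)))) /
        (μ₁ + μ₂ + μ₁ * E N (L₂ / μ₁)) := by
  obtain ⟨hμ₂low, hμ₂up⟩ := hμ₂
  have hμ₁pos : 0 < μ₁ := lt_of_lt_of_le hL₂pos hL₂μ₁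
  have hLh : 0 < L₂ - μ₂ := sub_pos.mpr hμ₂up
  have hMpos : 0 < L₂ + μ₂ := by
    have h1 : -L₂ < -L₂ * μ₁ / (L₂ + μ₁) := by
      rw [lt_div_iff₀ (by linarith : (0:ℝ) < L₂ + μ₁)]
      nlinarith
    linarith
  set s : ℕ → EuclideanSpace ℝ (Fin d) := fun k => x k - x (k + 1) with hs
  set G : ℕ → EuclideanSpace ℝ (Fin d) := fun k => gradient f₂ (x k) with hGdef
  have hg2 : ∀ k, HasGradientAt f₂ (G k) (x k) := fun k => (hf₂ (x k)).hasGradientAt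
  have hg1 : ∀ k, k ≤ N → HasGradientAt f₁ (G k) (x (k + 1)) := by
    intro k hk
    have h := (hf₁ (x (k + 1))).hasGradientAt
    rwa [hDCA k hk] at h
  set v : ℕ → EuclideanSpace ℝ (Fin d) := fun k => G k - G (k + 1) - μ₂ • s k with hvdef
  -- per-step decrease [E]
  have hE : ∀ k, k ≤ N →
      (μ₁ + μ₂) / 2 * ‖s k‖ ^ 2 + 1 / (2 * (L₂ - μ₂)) * ‖v k‖ ^ 2
        ≤ (f₁ (x k) - f₂ (x k)) - (f₁ (x (k + 1)) - f₂ (x (k + 1))) := by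
    intro k hk
    have h1 := grad_lower_s15 (hg1 k hk) hcμ₁ (x k)
    have h2 := grad_coco hμ₂up (hg2 k) (hg2 (k + 1)) hcμ₂ hcL₂
    have e2 : G (k + 1) - G k - μ₂ • (x (k + 1) - x k) = -(v k) := by
      simp only [hvdef, hs]; module
    have e1 : x (k + 1) - x k = -(s k) := by rw [hs]; simp
    rw [e2, e1, norm_neg, norm_neg, inner_neg_right] at h2
    have e0 : x k - x (k + 1) = s k := rfl
    rw [e0] at h1
    linarith
  -- monotonicity of ∇f₁ [C1]
  have hC1 : ∀ k, k + 1 ≤ N →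
      μ₁ * ‖s (k + 1)‖ ^ 2 ≤ ⟪G k - G (k + 1), s (k + 1)⟫_ℝ := by
    intro k hk
    have h1 := grad_lower_s15 (hg1 k (by omega)) hcμ₁ (x (k + 2))
    have h2 := grad_lower_s15 (hg1 (k + 1) hk) hcμ₁ (x (k + 1))
    have e1 : x (k + 2) - x (k + 1) = -(s (k + 1)) := by rw [hs]; simp
    have e2 : x (k + 1) - x (k + 2) = s (k + 1) := rfl
    rw [e1, norm_neg, inner_neg_right] at h1
    rw [e2] at h2
    rw [inner_sub_left]
    linarith
  -- cocoercivity combination [C2]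
  have hC2 : ∀ k, ‖v k‖ ^ 2 / (L₂ - μ₂) ≤ ⟪v k, s k⟫_ℝ := by
    intro k
    have h2 := grad_coco hμ₂up (hg2 k) (hg2 (k + 1)) hcμ₂ hcL₂
    have h3 := grad_coco hμ₂up (hg2 (k + 1)) (hg2 k) hcμ₂ hcL₂
    have e2 : G (k + 1) - G k - μ₂ • (x (k + 1) - x k) = -(v k) := by
      simp only [hvdef, hs]; module
    have e1 : x (k + 1) - x k = -(s k) := by rw [hs]; simp
    rw [e2, e1, norm_neg, norm_neg, inner_neg_right] at h2
    have e3 : x k - x (k + 1) = s k := rfl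
    have e4 : G k - G (k + 1) - μ₂ • (x k - x (k + 1)) = v k := by
      simp only [hvdef, hs]
    rw [e3, e4] at h3
    -- add h2 + h3 : ⟪G k - G (k+1), s k⟫ ≥ μ₂‖s k‖² + (1/(L₂-μ₂))‖v k‖²
    have e5 : ⟪v k, s k⟫_ℝ = ⟪G k, s k⟫_ℝ - ⟪G (k + 1), s k⟫_ℝ - μ₂ * ‖s k‖ ^ 2 := by
      rw [hvdef]
      simp only [inner_sub_left, real_inner_smul_left]
      rw [real_inner_self_eq_norm_sq]
    have e6 : ‖v k‖ ^ 2 / (L₂ - μ₂) = 2 * (1 / (2 * (L₂ - μ₂)) * ‖v k‖ ^ 2) := by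
      field_simp
    rw [e5, e6]
    linarith
  -- step shrinkage
  have hshrink : ∀ k, k + 1 ≤ N → μ₁ * ‖s (k + 1)‖ ≤ L₂ * ‖s k‖ := by
    intro k hk
    have h1 := hC1 k hk
    have hcs := real_inner_le_norm (G k - G (k + 1)) (s (k + 1))
    have hGb : ‖G k - G (k + 1)‖ ^ 2 ≤ L₂ ^ 2 * ‖s k‖ ^ 2 := by
      have hgv : G k - G (k + 1) = v k + μ₂ • s k := by
        simp only [hvdef]; module
      have hexp : ‖G k - G (k + 1)‖ ^ 2
          = ‖v k‖ ^ 2 + 2 * μ₂ * ⟪v k, s k⟫_ℝ + μ₂ ^ 2 * ‖s k‖ ^ 2 := by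
        rw [hgv, norm_add_sq_real, real_inner_smul_right, norm_smul, Real.norm_eq_abs,
          mul_pow, sq_abs]
        ring
      rw [hexp]
      exact shrink_sc L₂ μ₂ ‖v k‖ ‖s k‖ ⟪v k, s k⟫_ℝ hMpos hLh (norm_nonneg _) (norm_nonneg _)
        (hC2 k) (real_inner_le_norm _ _)
    have hGle : ‖G k - G (k + 1)‖ ≤ L₂ * ‖s k‖ := by
      nlinarith [norm_nonneg (G k - G (k + 1)), mul_nonneg hL₂pos.le (norm_nonneg (s k))]
    rcases eq_or_lt_of_le (norm_nonneg (s (k + 1))) with h0 | h0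
    · rw [← h0]
      have : (0:ℝ) ≤ L₂ * ‖s k‖ := mul_nonneg hL₂pos.le (norm_nonneg _)
      linarith
    · have hG1 : μ₁ * ‖s (k + 1)‖ ≤ ‖G k - G (k + 1)‖ := by nlinarith
      linarith
  -- iterate shrinkage
  have hrs : ∀ j, j ≤ N → (μ₁ / L₂) ^ j * ‖s N‖ ≤ ‖s (N - j)‖ := by
    intro j
    induction j with
    | zero => simp
    | succ m ih =>
      intro hm
      have h1 := ih (by omega)
      have hk : (N - (m + 1)) + 1 ≤ N := by omega
      have hkk : (N - (m + 1)) + 1 = N - m := by omega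
      have h2 := hshrink (N - (m + 1)) hk
      rw [hkk] at h2
      have hw : (0:ℝ) < μ₁ / L₂ := by positivity
      calc (μ₁ / L₂) ^ (m + 1) * ‖s N‖ = (μ₁ / L₂) * ((μ₁ / L₂) ^ m * ‖s N‖) := by ring
        _ ≤ (μ₁ / L₂) * ‖s (N - m)‖ := mul_le_mul_of_nonneg_left h1 hw.le
        _ ≤ ‖s (N - (m + 1))‖ := by
            rw [div_mul_eq_mul_div, div_le_iff₀ hL₂pos]
            nlinarith [h2]
  -- Q step
  have hQ : ∀ k, k + 1 ≤ N →
      μ₁ ^ 2 * (μ₁ + L₂) / L₂ ^ 2 * ‖s (k + 1)‖ ^ 2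
        ≤ (μ₁ + μ₂) * ‖s k‖ ^ 2 + ‖v k‖ ^ 2 / (L₂ - μ₂) := by
    intro k hk
    apply Qstep μ₁ L₂ μ₂ (‖s k‖ ^ 2) (‖v k‖ ^ 2) (‖s (k + 1)‖ ^ 2) ⟪v k, s k⟫_ℝ
      ⟪v k, s (k + 1)⟫_ℝ ⟪s k, s (k + 1)⟫_ℝ hL₂pos hL₂μ₁ hμ₂low hμ₂up
    · have h1 := hC1 k hk
      have h5 : ⟪G k - G (k + 1), s (k + 1)⟫_ℝ
          = ⟪v k, s (k + 1)⟫_ℝ + μ₂ * ⟪s k, s (k + 1)⟫_ℝ := by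
        have hgv : G k - G (k + 1) = v k + μ₂ • s k := by
          simp only [hvdef]; module
        rw [hgv, inner_add_left, real_inner_smul_left]
      linarith
    · exact hC2 k
    · exact sq_expand2 (v k) (s k) (s (k + 1)) _ _
    · exact sq_expand1 (s k) (s (k + 1)) _
  -- assemble
  set bb : ℝ := μ₁ ^ 2 * (μ₁ + L₂) / L₂ ^ 2 with hbb
  set w : ℝ := μ₁ / L₂ with hwdef
  set D : ℕ → ℝ := fun k => f₁ (x k) - f₂ (x k) with hD
  have hstep : ∀ k, k + 1 ≤ N → bb / 2 * ‖s (k + 1)‖ ^ 2 ≤ D k - D (k + 1) := by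
    intro k hk
    have h1 := hE k (by omega)
    have h2 := hQ k hk
    have e6 : ‖v k‖ ^ 2 / (L₂ - μ₂) = 2 * (1 / (2 * (L₂ - μ₂)) * ‖v k‖ ^ 2) := by field_simp
    rw [e6] at h2
    simp only [hD]
    linarith
  have hlast : (μ₁ + μ₂) / 2 * ‖s N‖ ^ 2 ≤ D N - D (N + 1) := by
    have h1 := hE N le_rfl
    have h2 : (0:ℝ) ≤ 1 / (2 * (L₂ - μ₂)) * ‖v N‖ ^ 2 := by positivity
    simp only [hD]
    linarith
  have htele : ∑ k ∈ Finset.range (N + 1), (D k - D (k + 1)) = D 0 - D (N + 1) :=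
    Finset.sum_range_sub' D (N + 1)
  have hsumlb : ∑ k ∈ Finset.range N, (bb / 2 * (w ^ (N - 1 - k)) ^ 2 * ‖s N‖ ^ 2)
      ≤ ∑ k ∈ Finset.range N, (D k - D (k + 1)) := by
    apply Finset.sum_le_sum
    intro k hk
    have hkN : k + 1 ≤ N := by
      have := Finset.mem_range.mp hk
      omega
    have h1 := hrs (N - 1 - k) (by omega)
    have hidx : N - (N - 1 - k) = k + 1 := by omega
    rw [hidx] at h1
    have hbnn : (0:ℝ) ≤ bb / 2 := by rw [hbb]; positivity
    have hwnn : (0:ℝ) ≤ w ^ (N - 1 - k) * ‖s N‖ := by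
      apply mul_nonneg _ (norm_nonneg _)
      rw [hwdef]; positivity
    have h2 : (w ^ (N - 1 - k) * ‖s N‖) ^ 2 ≤ ‖s (k + 1)‖ ^ 2 := by
      exact pow_le_pow_left₀ hwnn h1 2
    have h3 := hstep k hkN
    calc bb / 2 * (w ^ (N - 1 - k)) ^ 2 * ‖s N‖ ^ 2
        = bb / 2 * (w ^ (N - 1 - k) * ‖s N‖) ^ 2 := by ring
      _ ≤ bb / 2 * ‖s (k + 1)‖ ^ 2 := mul_le_mul_of_nonneg_left h2 hbnn
      _ ≤ D k - D (k + 1) := h3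
  have hreflect : ∑ k ∈ Finset.range N, (bb / 2 * (w ^ (N - 1 - k)) ^ 2 * ‖s N‖ ^ 2)
      = ∑ j ∈ Finset.range N, (bb / 2 * (w ^ j) ^ 2 * ‖s N‖ ^ 2) := by
    exact Finset.sum_range_reflect (fun j => bb / 2 * (w ^ j) ^ 2 * ‖s N‖ ^ 2) N
  have hEeq : μ₁ * E N (L₂ / μ₁) = ∑ j ∈ Finset.range N, bb * (w ^ j) ^ 2 := by
    have hz : ∀ j : ℕ, (L₂ / μ₁) ^ (-(j : ℤ)) = w ^ j := by
      intro j
      rw [zpow_neg, zpow_natCast, ← inv_pow, inv_div, hwdef]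
    simp only [E]
    rw [Finset.sum_congr rfl (fun j _ => hz j), Esum w N, Finset.mul_sum]
    apply Finset.sum_congr rfl
    intro j _
    have hpow : (w ^ j) ^ 2 = w ^ (2 * j) := by
      rw [← pow_mul]; ring_nf
    have hb : μ₁ * (w + w ^ 2) = bb := by
      rw [hwdef, hbb]
      field_simp
      ring
    rw [hpow, pow_succ, pow_succ, pow_succ]
    have : 2 * j + 1 = (2 * j) + 1 := rfl
    linear_combination (w ^ (2 * j)) * hb
  have total : (1 / 2) * (μ₁ + μ₂ + μ₁ * E N (L₂ / μ₁)) * ‖s N‖ ^ 2 ≤ D 0 - D (N + 1) := by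
    have h1 : ∑ k ∈ Finset.range (N + 1), (D k - D (k + 1))
        = (∑ k ∈ Finset.range N, (D k - D (k + 1))) + (D N - D (N + 1)) :=
      Finset.sum_range_succ _ N
    have h2 : ∑ j ∈ Finset.range N, (bb / 2 * (w ^ j) ^ 2 * ‖s N‖ ^ 2)
        = (∑ j ∈ Finset.range N, bb * (w ^ j) ^ 2) * ‖s N‖ ^ 2 / 2 := by
      rw [Finset.sum_mul, Finset.sum_div]
      apply Finset.sum_congr rfl
      intro j _
      ring
    rw [← htele, h1]
    have h3 := hsumlb
    rw [hreflect, h2, ← hEeq] at h3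
    nlinarith [h3, hlast]
  have hEnn : (0:ℝ) ≤ E N (L₂ / μ₁) := by
    apply Finset.sum_nonneg
    intro j _
    positivity
  have hden : (0:ℝ) < μ₁ + μ₂ + μ₁ * E N (L₂ / μ₁) := by nlinarith
  rw [le_div_iff₀ hden]
  have hsN : x N - x (N + 1) = s N := rfl
  rw [hsN]
  nlinarith [total]
end
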